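/- arXiv:1812.05746 — 2 statements merged into one kernel-verified Lean document; each statement's English description precedes it below -/
import Mathlib

section
/- Let V be a rational representation of G, let q be the smallest positive integer k such that N(u) ⊆ k·N(I) for every nonzero u ∈ V (weight polytopes taken with respect to the diagonal torus T). Then q·w_λ(I) ≤ w_λ(u) for every one-parameter subgroup λ of G and every nonzero u ∈ V. -/
open Filter Topology Matrix Set Pointwise

noncomputable section

/-- Quotient topology on the projectivization of a topological vector space. -/
instance projTop (K V : Type*) [DivisionRing K] [AddCommGroup V] [Module K V]
    [TopologicalSpace V] : TopologicalSpace (Projectivization K V) :=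
  inferInstanceAs (TopologicalSpace (Quotient (projectivizationSetoid K V)))

/-- The group `G = SL(N+1, ℂ)`. -/
abbrev SL (N : ℕ) := Matrix.SpecialLinearGroup (Fin (N + 1)) ℂ

/-- A representation `ρ` of `SL(N+1,ℂ)` is rational if every matrix coefficient
`σ ↦ α (ρ σ v)` is a polynomial function of the entries of `σ`. -/
def IsRational {N : ℕ} {V : Type*} [AddCommGroup V] [Module ℂ V]
    (ρ : SL N →* (V ≃ₗ[ℂ] V)) : Prop :=
  ∀ (α : V →ₗ[ℂ] ℂ) (v : V), ∃ p : MvPolynomial (Fin (N + 1) × Fin (N + 1)) ℂ,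
    ∀ σ : SL N, α (ρ σ v) =
      MvPolynomial.eval (fun ij => (σ : Matrix (Fin (N + 1)) (Fin (N + 1)) ℂ) ij.1 ij.2) p

/-- A homomorphism `ℂ* → SL(N+1,ℂ)` is a one-parameter subgroup if each matrix
entry is a Laurent polynomial in `t`. -/
def IsOneParam {N : ℕ} (lam : ℂˣ →* SL N) : Prop :=
  ∀ i j : Fin (N + 1), ∃ c : ℤ →₀ ℂ, ∀ t : ℂˣ,
    ((lam t : Matrix (Fin (N + 1)) (Fin (N + 1)) ℂ)) i j = ∑ n ∈ c.support, c n * (t : ℂ) ^ n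

/-- The filter of punctured neighborhoods of `0 ∈ ℂ`, pulled back to `ℂˣ`:
"`t → 0`, `t ∈ ℂ*`". -/
def zeroFilter : Filter ℂˣ := comap Units.val (𝓝[≠] (0 : ℂ))

/-- `w` is a weight of `v` w.r.t. the one-parameter family `lam`:
`t^{-w} • ρ(lam t) v` has a nonzero limit as `t → 0`. -/
def HasWeight {N : ℕ} {V : Type*} [NormedAddCommGroup V] [NormedSpace ℂ V]
    (ρ : SL N →* (V ≃ₗ[ℂ] V)) (lam : ℂˣ → SL N) (v : V) (w : ℤ) : Prop :=
  ∃ v₀ : V, v₀ ≠ 0 ∧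
    Tendsto (fun t : ℂˣ => ((t : ℂ) ^ (-w)) • (ρ (lam t) v)) zeroFilter (𝓝 v₀)

/-- `w` is the weight of the identity matrix `I ∈ gl(N+1,ℂ)` w.r.t. `lam`, for the
representation of `SL(N+1,ℂ)` on `gl(N+1,ℂ)` given by left multiplication
(so `ρ(σ) I = σ`). -/
def HasWeightI {N : ℕ} (lam : ℂˣ → SL N) (w : ℤ) : Prop :=
  ∃ M₀ : Matrix (Fin (N + 1)) (Fin (N + 1)) ℂ, M₀ ≠ 0 ∧
    Tendsto (fun t : ℂˣ => ((t : ℂ) ^ (-w)) • ((lam t : Matrix (Fin (N + 1)) (Fin (N + 1)) ℂ)))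
      zeroFilter (𝓝 M₀)

/-- K-semistability of a pair `(v, w)`: `w_λ(w) ≤ w_λ(v)` for all one-parameter subgroups. -/
def KSemistable {N : ℕ} {V W : Type*} [NormedAddCommGroup V] [NormedSpace ℂ V]
    [NormedAddCommGroup W] [NormedSpace ℂ W]
    (ρV : SL N →* (V ≃ₗ[ℂ] V)) (ρW : SL N →* (W ≃ₗ[ℂ] W)) (v : V) (w : W) : Prop :=
  ∀ lam : ℂˣ →* SL N, IsOneParam lam →
    ∀ a b : ℤ, HasWeight ρW (fun t => lam t) w a → HasWeight ρV (fun t => lam t) v b → a ≤ b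

/-- `q = deg(V)`: the least positive integer `q` with `q·w_λ(I) ≤ w_λ(u)` for all `u ≠ 0`
and all one-parameter subgroups `λ`. -/
def IsDeg {N : ℕ} {V : Type*} [NormedAddCommGroup V] [NormedSpace ℂ V]
    (ρV : SL N →* (V ≃ₗ[ℂ] V)) (q : ℕ) : Prop :=
  IsLeast {k : ℕ | 0 < k ∧ ∀ lam : ℂˣ →* SL N, IsOneParam lam →
    ∀ u : V, u ≠ 0 → ∀ wI wu : ℤ, HasWeightI (fun t => lam t) wI →
      HasWeight ρV (fun t => lam t) u wu → (k : ℤ) * wI ≤ wu} q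

/-- K-stability of a pair `(v, w)`, where `q = deg(V)`. -/
def KStable {N : ℕ} {V W : Type*} [NormedAddCommGroup V] [NormedSpace ℂ V]
    [NormedAddCommGroup W] [NormedSpace ℂ W]
    (ρV : SL N →* (V ≃ₗ[ℂ] V)) (ρW : SL N →* (W ≃ₗ[ℂ] W)) (v : V) (w : W) (q : ℕ) : Prop :=
  KSemistable ρV ρW v w ∧
  ∀ lam : ℂˣ →* SL N, IsOneParam lam → ∀ wI wv ww : ℤ,
    HasWeightI (fun t => lam t) wI → HasWeight ρV (fun t => lam t) v wv →
    HasWeight ρW (fun t => lam t) w ww → (q : ℤ) * wI < wv → ww < wv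

/-- Uniform K-stability of a pair `(v, w)`, where `q = deg(V)`:
`m (w_λ(v) − w_λ(w)) ≥ w_λ(v) − q·w_λ(I)` for some `m > 0` and all `λ`. -/
def KUniform {N : ℕ} {V W : Type*} [NormedAddCommGroup V] [NormedSpace ℂ V]
    [NormedAddCommGroup W] [NormedSpace ℂ W]
    (ρV : SL N →* (V ≃ₗ[ℂ] V)) (ρW : SL N →* (W ≃ₗ[ℂ] W)) (v : V) (w : W) (q : ℕ) : Prop :=
  ∃ m : ℕ, 0 < m ∧ ∀ lam : ℂˣ →* SL N, IsOneParam lam → ∀ wI wv ww : ℤ,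
    HasWeightI (fun t => lam t) wI → HasWeight ρV (fun t => lam t) v wv →
    HasWeight ρW (fun t => lam t) w ww →
    (m : ℤ) * (wv - ww) ≥ wv - (q : ℤ) * wI

/-- The element `diag(t₁, …, t_N, (t₁⋯t_N)⁻¹)` of the diagonal maximal torus of `SL(N+1,ℂ)`. -/
def torusElem (N : ℕ) (t : Fin N → ℂˣ) : SL N :=
  ⟨Matrix.diagonal (Fin.snoc (fun i => (t i : ℂ)) ((∏ i, (t i : ℂ))⁻¹)), by
    rw [Matrix.det_diagonal, Fin.prod_univ_castSucc]
    simp only [Fin.snoc_castSucc, Fin.snoc_last]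
    exact mul_inv_cancel₀ (Finset.prod_ne_zero_iff.mpr fun i _ => (t i).ne_zero)⟩

/-- `A(u)`: the set of torus weights appearing in `u`, given the weight space
projections `π` and the weight set `A`. -/
def wtSupp {N : ℕ} {V : Type*} [AddCommGroup V] [Module ℂ V] (A : Finset (Fin N → ℤ))
    (π : (Fin N → ℤ) → (V →ₗ[ℂ] V)) (u : V) : Set (Fin N → ℤ) :=
  {a | a ∈ A ∧ π a u ≠ 0}

/-- The weight polytope `N(u) ⊆ ℝ^N`: the convex hull of `A(u)`. -/
def wtPolytope {N : ℕ} {V : Type*} [AddCommGroup V] [Module ℂ V] (A : Finset (Fin N → ℤ))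
    (π : (Fin N → ℤ) → (V →ₗ[ℂ] V)) (u : V) : Set (Fin N → ℝ) :=
  convexHull ℝ ((fun a : Fin N → ℤ => fun i => (a i : ℝ)) '' wtSupp A π u)

/-- `N(I) = conv{e₁, …, e_N, −(e₁+⋯+e_N)} ⊆ ℝ^N`, the weight polytope of the identity
matrix for the left multiplication action on `gl(N+1,ℂ)`. -/
def simplexNI (N : ℕ) : Set (Fin N → ℝ) :=
  convexHull ℝ (insert (fun _ => (-1 : ℝ)) (Set.range fun i : Fin N => Pi.single i (1 : ℝ)))

/-- `(A, π)` is a weight decomposition of the representation `ρ` with respect to the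
diagonal maximal torus of `SL(N+1,ℂ)`. -/
def IsWtDecomp {N : ℕ} {V : Type*} [NormedAddCommGroup V] [NormedSpace ℂ V]
    (ρ : SL N →* (V ≃ₗ[ℂ] V)) (A : Finset (Fin N → ℤ))
    (π : (Fin N → ℤ) → (V →ₗ[ℂ] V)) : Prop :=
  (∀ u : V, ∑ a ∈ A, π a u = u) ∧
  ∀ a ∈ A, ∀ (t : Fin N → ℂˣ) (u : V),
    ρ (torusElem N t) (π a u) = (∏ i, (t i : ℂ) ^ (a i)) • π a u

/-- `(A, π)` is a weight decomposition of a linear action `ρ` of the torus `(ℂ*)^N`. -/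
def IsWtDecompT {N : ℕ} {V : Type*} [AddCommGroup V] [Module ℂ V]
    (ρ : (Fin N → ℂˣ) →* (V ≃ₗ[ℂ] V)) (A : Finset (Fin N → ℤ))
    (π : (Fin N → ℤ) → (V →ₗ[ℂ] V)) : Prop :=
  (∀ u : V, ∑ a ∈ A, π a u = u) ∧
  ∀ a ∈ A, ∀ (t : Fin N → ℂˣ) (u : V), ρ t (π a u) = (∏ i, (t i : ℂ) ^ (a i)) • π a u

/-- The torus weight `w_{λ_ℓ}(u) = min { ⟨ℓ, a⟩ : a ∈ A(u) }`. -/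
def wtT {N : ℕ} {V : Type*} [AddCommGroup V] [Module ℂ V] (A : Finset (Fin N → ℤ))
    (π : (Fin N → ℤ) → (V →ₗ[ℂ] V)) (ℓ : Fin N → ℤ) (u : V) : ℤ :=
  sInf ((fun a : Fin N → ℤ => ∑ i, ℓ i * a i) '' wtSupp A π u)

/-- `w_{λ_ℓ}(I) = min {ℓ₁, …, ℓ_N, −(ℓ₁+⋯+ℓ_N)}`. -/
def wIT {N : ℕ} (ℓ : Fin N → ℤ) : ℤ := sInf (insert (-(∑ i, ℓ i)) (Set.range ℓ))

/-- The support function of a set `P ⊆ ℝ^N`. -/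
def suppFn {N : ℕ} (P : Set (Fin N → ℝ)) (x : Fin N → ℝ) : ℝ :=
  sSup ((fun y => ∑ i, x i * y i) '' P)

/-- The squared Hilbert–Schmidt norm of `σ ∈ SL(N+1,ℂ) ⊆ gl(N+1,ℂ)`. -/
def hsNormSq {N : ℕ} (σ : SL N) : ℝ :=
  ∑ i, ∑ j, ‖(σ : Matrix (Fin (N + 1)) (Fin (N + 1)) ℂ) i j‖ ^ 2

/-- Paul's functional `p_{v,w}(σ) = log‖ρ_W(σ)w‖² − log‖ρ_V(σ)v‖²`. -/
def pFun {N : ℕ} {V W : Type*} [NormedAddCommGroup V] [InnerProductSpace ℂ V]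
    [NormedAddCommGroup W] [InnerProductSpace ℂ W]
    (ρV : SL N →* (V ≃ₗ[ℂ] V)) (ρW : SL N →* (W ≃ₗ[ℂ] W)) (v : V) (w : W) (σ : SL N) : ℝ :=
  Real.log (‖ρW σ w‖ ^ 2) - Real.log (‖ρV σ v‖ ^ 2)

/-! ### Auxiliary lemmas for `statement3` -/

section StatementThreeAux

open Finset in
private lemma laurent_zero' (s : Finset ℤ) (c : ℤ → ℂ)
    (h : ∀ t : ℂˣ, ∑ n ∈ s, c n * (t : ℂ) ^ n = 0) : ∀ n ∈ s, c n = 0 := by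
  rcases s.eq_empty_or_nonempty with rfl | hs
  · simp
  set m := s.min' hs with hm
  set p : Polynomial ℂ := ∑ n ∈ s, Polynomial.C (c n) * Polynomial.X ^ (n - m).toNat with hp
  have hroot : ∀ t : ℂ, t ≠ 0 → p.eval t = 0 := by
    intro t ht
    have h1 : ∑ n ∈ s, c n * t ^ n = 0 := by simpa using h (Units.mk0 t ht)
    have h2 : p.eval t = t ^ (-m) * ∑ n ∈ s, c n * t ^ n := by
      rw [Finset.mul_sum, hp, Polynomial.eval_finset_sum]
      refine Finset.sum_congr rfl fun n hn => ?_
      have hnm : m ≤ n := s.min'_le n hn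
      rw [Polynomial.eval_mul, Polynomial.eval_C, Polynomial.eval_pow, Polynomial.eval_X,
        ← zpow_natCast, Int.toNat_of_nonneg (by omega : (0:ℤ) ≤ n - m)]
      rw [← mul_assoc, mul_comm (t ^ (-m)) (c n), mul_assoc, ← zpow_add₀ ht]
      ring_nf
    rw [h2, h1, mul_zero]
  have hp0 : p = 0 := by
    have : Set.Infinite {t : ℂ | p.IsRoot t} := by
      apply Set.Infinite.mono (s := {(0:ℂ)}ᶜ)
      · intro t ht; exact hroot t ht
      · exact Set.Finite.infinite_compl (Set.finite_singleton 0)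
    exact Polynomial.eq_zero_of_infinite_isRoot p this
  intro n hn
  have hinj : ∀ k ∈ s, ∀ l ∈ s, (k - m).toNat = (l - m).toNat → k = l := by
    intro k hk l hl hkl
    have h1 : m ≤ k := s.min'_le k hk
    have h2 : m ≤ l := s.min'_le l hl
    omega
  have := congrArg (fun q => Polynomial.coeff q ((n - m).toNat)) hp0
  simp only [hp, Polynomial.finset_sum_coeff, Polynomial.coeff_C_mul,
    Polynomial.coeff_X_pow, Polynomial.coeff_zero] at this
  rw [Finset.sum_eq_single n] at this
  · simpa using this
  · intro b hb hbn
    rw [if_neg (fun hc => hbn (hinj b hb n hn hc.symm)), mul_zero]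
  · intro hns; exact absurd hn hns

private lemma laurent_zero_matrix {n1 : ℕ} (s : Finset ℤ)
    (C : ℤ → Matrix (Fin n1) (Fin n1) ℂ)
    (h : ∀ t : ℂˣ, ∑ k ∈ s, (t : ℂ) ^ k • C k = 0) : ∀ k ∈ s, C k = 0 := by
  intro k hk
  ext i j
  have := laurent_zero' s (fun k => C k i j) (fun t => by
    have h2 := congrFun (congrFun (h t) i) j
    simp only [Matrix.sum_apply, Matrix.smul_apply, smul_eq_mul, Matrix.zero_apply] at h2
    rw [← h2]
    exact Finset.sum_congr rfl fun n _ => mul_comm _ _) k hk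
  simpa using this

instance zeroFilter_neBot : zeroFilter.NeBot := by
  rw [zeroFilter, comap_neBot_iff]
  intro U hU
  have h2 : U ∩ {(0:ℂ)}ᶜ ∈ 𝓝[≠] (0:ℂ) := inter_mem hU self_mem_nhdsWithin
  obtain ⟨x, hxU, hx0⟩ := Filter.nonempty_of_mem h2
  exact ⟨Units.mk0 x hx0, hxU⟩

private lemma tendsto_val0 : Tendsto (fun t : ℂˣ => (t : ℂ)) zeroFilter (𝓝 0) :=
  tendsto_comap.mono_right nhdsWithin_le_nhds

private lemma tendsto_zpow0 (k : ℤ) (hk : 0 < k) :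
    Tendsto (fun t : ℂˣ => (t : ℂ) ^ k) zeroFilter (𝓝 0) := by
  have h := tendsto_val0.pow k.toNat
  rw [zero_pow (by omega)] at h
  refine h.congr fun t => ?_
  rw [← zpow_natCast, Int.toNat_of_nonneg hk.le]

variable {M : Type*} [AddCommGroup M] [Module ℂ M] [TopologicalSpace M]
  [T2Space M] [ContinuousAdd M] [ContinuousSMul ℂ M]

private lemma weight_lb {ι : Type*} (s : Finset ι) (e : ι → ℤ) (v : ι → M) (B w : ℤ)
    (hB : ∀ a ∈ s, v a ≠ 0 → B ≤ e a) (v₀ : M) (hv₀ : v₀ ≠ 0)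
    (hlim : Tendsto (fun t : ℂˣ => ((t : ℂ) ^ (-w)) • ∑ a ∈ s, ((t : ℂ) ^ (e a)) • v a)
      zeroFilter (𝓝 v₀)) : B ≤ w := by
  by_contra hlt
  push_neg at hlt
  have key : Tendsto (fun t : ℂˣ => ((t : ℂ) ^ (-w)) • ∑ a ∈ s, ((t : ℂ) ^ (e a)) • v a)
      zeroFilter (𝓝 0) := by
    have heq : ∀ t : ℂˣ, ((t : ℂ) ^ (-w)) • ∑ a ∈ s, ((t : ℂ) ^ (e a)) • v a
        = ∑ a ∈ s, ((t : ℂ) ^ (e a - w)) • v a := by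
      intro t
      rw [Finset.smul_sum]
      refine Finset.sum_congr rfl fun a _ => ?_
      rw [smul_smul, ← zpow_add₀ t.ne_zero]
      ring_nf
    rw [show (0 : M) = ∑ a ∈ s, (0 : M) by simp]
    refine Tendsto.congr (fun t => (heq t).symm) (tendsto_finset_sum _ fun a ha => ?_)
    by_cases hva : v a = 0
    · simp only [hva, smul_zero]; exact tendsto_const_nhds
    · have he : 0 < e a - w := by have := hB a ha hva; omega
      have := (tendsto_zpow0 _ he).smul_const (v a)
      simpa using this
  exact hv₀ (tendsto_nhds_unique hlim key)

private lemma weight_ub {ι : Type*} [DecidableEq ι] (s : Finset ι) (e : ι → ℤ) (v : ι → M)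
    (m w : ℤ) (hm : ∀ a ∈ s, m ≤ e a)
    (hc : ∑ a ∈ s.filter (fun a => e a = m), v a ≠ 0)
    (v₀ : M) (hv₀ : v₀ ≠ 0)
    (hlim : Tendsto (fun t : ℂˣ => ((t : ℂ) ^ (-w)) • ∑ a ∈ s, ((t : ℂ) ^ (e a)) • v a)
      zeroFilter (𝓝 v₀)) : w ≤ m := by
  by_contra hlt
  push_neg at hlt
  set c := ∑ a ∈ s.filter (fun a => e a = m), v a with hcdef
  have h1 : Tendsto (fun t : ℂˣ => ((t : ℂ) ^ (-m)) • ∑ a ∈ s, ((t : ℂ) ^ (e a)) • v a)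
      zeroFilter (𝓝 c) := by
    have heq : ∀ t : ℂˣ, ((t : ℂ) ^ (-m)) • ∑ a ∈ s, ((t : ℂ) ^ (e a)) • v a
        = ∑ a ∈ s, ((t : ℂ) ^ (e a - m)) • v a := by
      intro t
      rw [Finset.smul_sum]
      refine Finset.sum_congr rfl fun a _ => ?_
      rw [smul_smul, ← zpow_add₀ t.ne_zero]
      ring_nf
    have h3 : Tendsto (fun t : ℂˣ => ∑ a ∈ s, ((t : ℂ) ^ (e a - m)) • v a) zeroFilter
        (𝓝 (∑ a ∈ s, if e a = m then v a else 0)) := by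
      refine tendsto_finset_sum _ fun a ha => ?_
      by_cases hea : e a = m
      · simp only [hea, sub_self, zpow_zero, one_smul, if_pos]
        exact tendsto_const_nhds
      · have he : 0 < e a - m := by have := hm a ha; omega
        rw [if_neg hea]
        simpa using (tendsto_zpow0 _ he).smul_const (v a)
    rw [← Finset.sum_filter] at h3
    exact Tendsto.congr (fun t => (heq t).symm) (by simpa [hcdef] using h3)
  have h2 : Tendsto (fun t : ℂˣ => ((t : ℂ) ^ (-m)) • ∑ a ∈ s, ((t : ℂ) ^ (e a)) • v a)
      zeroFilter (𝓝 0) := by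
    have heq : ∀ t : ℂˣ, ((t : ℂ) ^ (-m)) • ∑ a ∈ s, ((t : ℂ) ^ (e a)) • v a
        = ((t : ℂ) ^ (w - m)) • (((t : ℂ) ^ (-w)) • ∑ a ∈ s, ((t : ℂ) ^ (e a)) • v a) := by
      intro t
      rw [smul_smul, ← zpow_add₀ t.ne_zero]
      ring_nf
    rw [show (0 : M) = (0 : ℂ) • v₀ by simp]
    exact Tendsto.congr (fun t => (heq t).symm) ((tendsto_zpow0 _ (by omega)).smul hlim)
  exact hc (tendsto_nhds_unique h1 h2)

private lemma prod_zpow_sumG {G : Type*} [CommGroup G] (x : G) {ι : Type*} (s : Finset ι)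
    (f : ι → ℤ) : ∏ i ∈ s, x ^ f i = x ^ (∑ i ∈ s, f i) := by
  classical
  induction s using Finset.induction with
  | empty => simp
  | insert _ _ h ih => rw [Finset.prod_insert h, Finset.sum_insert h, ih, _root_.zpow_add]

private lemma prod_zpow_sumC {x : ℂ} (hx : x ≠ 0) {ι : Type*} (s : Finset ι)
    (f : ι → ℤ) : ∏ i ∈ s, x ^ f i = x ^ (∑ i ∈ s, f i) := by
  classical
  induction s using Finset.induction with
  | empty => simp
  | insert _ _ h ih => rw [Finset.prod_insert h, Finset.sum_insert h, ih, zpow_add₀ hx]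

private lemma sum_mulVecLin {n1 : ℕ} {ι : Type*} (s : Finset ι)
    (f : ι → Matrix (Fin n1) (Fin n1) ℂ) (w : Fin n1 → ℂ) :
    (∑ i ∈ s, f i).mulVecLin w = ∑ i ∈ s, (f i).mulVecLin w := by
  classical
  induction s using Finset.induction with
  | empty => simp
  | insert _ _ h ih =>
    rw [Finset.sum_insert h, Finset.sum_insert h, ← ih, Matrix.mulVecLin_add]
    rfl

private lemma oneparam_diag {N : ℕ} (lam : ℂˣ →* SL N) (hlam : IsOneParam lam) :
    ∃ (g : SL N) (ℓ : Fin (N + 1) → ℤ), (∑ i, ℓ i = 0) ∧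
      ∀ t : ℂˣ, (lam t : Matrix (Fin (N + 1)) (Fin (N + 1)) ℂ) =
        ((g⁻¹ : SL N) : Matrix (Fin (N + 1)) (Fin (N + 1)) ℂ) *
          Matrix.diagonal (fun i => (t : ℂ) ^ (ℓ i)) *
          ((g : SL N) : Matrix (Fin (N + 1)) (Fin (N + 1)) ℂ) := by
  classical
  set c : Fin (N + 1) → Fin (N + 1) → (ℤ →₀ ℂ) := fun i j => (hlam i j).choose with hcdef
  set s : Finset ℤ :=
    Finset.univ.biUnion (fun p : Fin (N + 1) × Fin (N + 1) => (c p.1 p.2).support) with hsdef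
  set A : ℤ → Matrix (Fin (N + 1)) (Fin (N + 1)) ℂ :=
    fun k => Matrix.of fun i j => c i j k with hAdef
  have hrep : ∀ t : ℂˣ, (lam t : Matrix (Fin (N + 1)) (Fin (N + 1)) ℂ)
      = ∑ k ∈ s, (t : ℂ) ^ k • A k := by
    intro t
    ext i j
    rw [(hlam i j).choose_spec t]
    have hsub : (c i j).support ⊆ s := fun k hk =>
      Finset.mem_biUnion.mpr ⟨(i, j), Finset.mem_univ _, hk⟩
    rw [Finset.sum_subset hsub (fun k _ hk => by
      rw [Finsupp.notMem_support_iff.mp hk, zero_mul])]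
    simp only [Matrix.sum_apply, Matrix.smul_apply, Matrix.of_apply, smul_eq_mul]
    exact Finset.sum_congr rfl fun k _ => mul_comm _ _
  -- orthogonal idempotents
  have hmul2 : ∀ t t' : ℂˣ, ∑ k ∈ s, (t' : ℂ) ^ k • ((t : ℂ) ^ k • A k)
      = ∑ k ∈ s, (t' : ℂ) ^ k • (∑ m ∈ s, (t : ℂ) ^ m • (A m * A k)) := by
    intro t t'
    have h3 : (lam (t * t') : Matrix (Fin (N + 1)) (Fin (N + 1)) ℂ)
        = (lam t : Matrix (Fin (N + 1)) (Fin (N + 1)) ℂ) * lam t' := by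
      rw [_root_.map_mul lam t t']; rfl
    calc ∑ k ∈ s, (t' : ℂ) ^ k • ((t : ℂ) ^ k • A k)
        = ∑ k ∈ s, ((t * t' : ℂˣ) : ℂ) ^ k • A k := by
          refine Finset.sum_congr rfl fun k _ => ?_
          rw [smul_smul, Units.val_mul, mul_zpow, mul_comm]
      _ = (lam (t * t') : Matrix (Fin (N + 1)) (Fin (N + 1)) ℂ) := (hrep _).symm
      _ = (lam t : Matrix (Fin (N + 1)) (Fin (N + 1)) ℂ) * lam t' := h3
      _ = (∑ m ∈ s, (t : ℂ) ^ m • A m) * (∑ k ∈ s, (t' : ℂ) ^ k • A k) := by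
          rw [hrep, hrep]
      _ = ∑ k ∈ s, ∑ m ∈ s, (t' : ℂ) ^ k • ((t : ℂ) ^ m • (A m * A k)) := by
          rw [Finset.sum_mul_sum]
          rw [Finset.sum_comm]
          refine Finset.sum_congr rfl fun k _ => Finset.sum_congr rfl fun m _ => ?_
          rw [Matrix.smul_mul, Matrix.mul_smul, smul_smul, smul_smul, mul_comm]
      _ = ∑ k ∈ s, (t' : ℂ) ^ k • (∑ m ∈ s, (t : ℂ) ^ m • (A m * A k)) := by
          refine Finset.sum_congr rfl fun k _ => ?_
          rw [Finset.smul_sum]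
  have key1 : ∀ (t : ℂˣ), ∀ k ∈ s, ∑ m ∈ s, (t : ℂ) ^ m • (A m * A k) = (t : ℂ) ^ k • A k := by
    intro t k hk
    have h := laurent_zero_matrix s
      (fun k => (∑ m ∈ s, (t : ℂ) ^ m • (A m * A k)) - (t : ℂ) ^ k • A k) (fun t' => by
        simp only [smul_sub]
        rw [Finset.sum_sub_distrib, ← hmul2 t t', sub_self]) k hk
    exact sub_eq_zero.mp h
  have key2 : ∀ m ∈ s, ∀ k ∈ s, A m * A k = if m = k then A k else 0 := by
    intro m hm k hk
    have h := laurent_zero_matrix s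
      (fun m => A m * A k - (if m = k then A k else 0)) (fun t => by
        simp only [smul_sub]
        rw [Finset.sum_sub_distrib, key1 t k hk]
        have : ∑ m ∈ s, (t : ℂ) ^ m • (if m = k then A k else 0)
            = (t : ℂ) ^ k • A k := by
          rw [Finset.sum_congr rfl (fun m _ => by
            rw [smul_ite, smul_zero] :
            ∀ m ∈ s, (t : ℂ) ^ m • (if m = k then A k else 0)
              = if m = k then (t : ℂ) ^ m • A k else 0)]
          rw [Finset.sum_ite_eq' s k (fun m => (t : ℂ) ^ m • A k), if_pos hk]
        rw [this, sub_self]) m hm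
    exact sub_eq_zero.mp h
  have hone : ∑ k ∈ s, A k = 1 := by
    have h := hrep 1
    simp only [Units.val_one, _root_.one_zpow, one_smul] at h
    rw [← h, _root_.map_one lam]
    rfl
  -- eigenspace decomposition
  set Vn : {k // k ∈ s} → Submodule ℂ (Fin (N + 1) → ℂ) :=
    fun k => LinearMap.range (A k.val).mulVecLin with hVndef
  set d : {k // k ∈ s} → ℕ := fun k => Module.finrank ℂ (Vn k) with hddef
  set bas : (k : {k // k ∈ s}) → Module.Basis (Fin (d k)) ℂ (Vn k) :=
    fun k => Module.finBasis ℂ (Vn k) with hbasdef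
  set vv : (Σ k : {k // k ∈ s}, Fin (d k)) → (Fin (N + 1) → ℂ) :=
    fun p => (bas p.1 p.2 : Fin (N + 1) → ℂ) with hvvdef
  have hAv : ∀ (m) (_ : m ∈ s) (k : {k // k ∈ s}) (w : Fin (N + 1) → ℂ) (_ : w ∈ Vn k),
      (A m).mulVecLin w = if m = k.val then w else 0 := by
    intro m hm k w hw
    obtain ⟨x, rfl⟩ := hw
    simp only [Matrix.mulVecLin_apply]
    rw [Matrix.mulVec_mulVec, key2 m hm k.val k.2]
    split_ifs with h
    · rfl
    · rw [Matrix.zero_mulVec]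
  have hvvmem : ∀ p : (Σ k : {k // k ∈ s}, Fin (d k)), vv p ∈ Vn p.1 := fun p =>
    (bas p.1 p.2).2
  have hli : LinearIndependent ℂ vv := by
    rw [Fintype.linearIndependent_iff]
    intro gc hg p
    obtain ⟨k, j⟩ := p
    have h1 : ∑ i : (Σ k : {k // k ∈ s}, Fin (d k)), gc i • (A k.val).mulVecLin (vv i)
        = 0 := by
      have h0 := congrArg (A k.val).mulVecLin hg
      rw [map_sum, map_zero] at h0
      simpa only [_root_.map_smul] using h0
    have hterm : ∀ i : (Σ k : {k // k ∈ s}, Fin (d k)),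
        (A k.val).mulVecLin (vv i) = if i.1 = k then vv i else 0 := by
      intro i
      rw [hAv k.val k.2 i.1 (vv i) (hvvmem i)]
      by_cases h : i.1 = k
      · simp [h]
      · rw [if_neg (fun hc => h (Subtype.ext hc.symm)), if_neg h]
    simp only [hterm] at h1
    rw [← Finset.univ_sigma_univ, Finset.sum_sigma] at h1
    rw [Finset.sum_eq_single k (fun k' _ hk' => by
        simp [if_neg hk'])
      (fun hk => absurd (Finset.mem_univ k) hk)] at h1
    simp only [if_pos rfl] at h1
    have likk : LinearIndependent ℂ (fun j : Fin (d k) => vv ⟨k, j⟩) :=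
      (bas k).linearIndependent.map' (Vn k).subtype (Submodule.ker_subtype _)
    exact Fintype.linearIndependent_iff.mp likk (fun j => gc ⟨k, j⟩) h1 j
  have hsp : ⊤ ≤ Submodule.span ℂ (Set.range vv) := by
    intro w _
    have hw : w = ∑ k ∈ s.attach, (A k.val).mulVecLin w := by
      have h1 : (1 : Matrix (Fin (N + 1)) (Fin (N + 1)) ℂ).mulVecLin w = w := by
        simp [Matrix.mulVecLin_apply]
      rw [← hone] at h1
      conv_lhs => rw [← h1]
      rw [← Finset.sum_attach s (fun k => A k)]
      exact sum_mulVecLin _ _ w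
    rw [hw]
    refine Submodule.sum_mem _ fun k _ => ?_
    have hVk : (Vn k : Set (Fin (N + 1) → ℂ)) ⊆
        (Submodule.span ℂ (Set.range vv) : Set (Fin (N + 1) → ℂ)) := by
      intro x hx
      have hx1 : (⟨x, hx⟩ : Vn k) ∈ Submodule.span ℂ (Set.range (bas k)) := by
        rw [(bas k).span_eq]; trivial
      have hx2 := Submodule.mem_map_of_mem (f := (Vn k).subtype) hx1
      rw [Submodule.map_span] at hx2
      refine Submodule.span_mono ?_ hx2
      rintro _ ⟨_, ⟨jj, rfl⟩, rfl⟩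
      exact ⟨⟨k, jj⟩, rfl⟩
    exact hVk (LinearMap.mem_range_self _ w)
  set b0 : Module.Basis (Σ k : {k // k ∈ s}, Fin (d k)) ℂ (Fin (N + 1) → ℂ) :=
    Module.Basis.mk hli hsp with hb0def
  have heig0 : ∀ (t : ℂˣ) (i : (Σ k : {k // k ∈ s}, Fin (d k))),
      (lam t : Matrix (Fin (N + 1)) (Fin (N + 1)) ℂ).mulVecLin (b0 i)
        = ((t : ℂ) ^ (i.1.val : ℤ)) • b0 i := by
    intro t i
    rw [hb0def, Module.Basis.mk_apply, hrep t, sum_mulVecLin]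
    have hterm : ∀ k ∈ s, ((t : ℂ) ^ k • A k).mulVecLin (vv i)
        = if k = i.1.val then (t : ℂ) ^ k • vv i else 0 := by
      intro k hk
      have : ((t : ℂ) ^ k • A k).mulVecLin (vv i) = (t : ℂ) ^ k • (A k).mulVecLin (vv i) := by
        simp only [Matrix.mulVecLin_apply, Matrix.smul_mulVec]
      rw [this, hAv k hk i.1 (vv i) (hvvmem i)]
      split_ifs with h
      · rfl
      · rw [smul_zero]
    rw [Finset.sum_congr rfl hterm, Finset.sum_ite_eq' s i.1.val
      (fun k => (t : ℂ) ^ k • vv i), if_pos i.1.2]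
  -- change of basis
  set stdb : Module.Basis (Fin (N + 1)) ℂ (Fin (N + 1) → ℂ) := Pi.basisFun ℂ (Fin (N + 1)) with hstdb
  set eqv : (Σ k : {k // k ∈ s}, Fin (d k)) ≃ Fin (N + 1) := b0.indexEquiv stdb with heqv
  set b : Module.Basis (Fin (N + 1)) ℂ (Fin (N + 1) → ℂ) := b0.reindex eqv with hbdef
  set ℓ : Fin (N + 1) → ℤ := fun i => ((eqv.symm i).1.val : ℤ) with hldef
  have heig : ∀ (t : ℂˣ) (i : Fin (N + 1)),
      (lam t : Matrix (Fin (N + 1)) (Fin (N + 1)) ℂ).mulVecLin (b i)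
        = ((t : ℂ) ^ (ℓ i)) • b i := by
    intro t i
    rw [hbdef, Module.Basis.reindex_apply]
    exact heig0 t _
  have hdiag : ∀ t : ℂˣ,
      LinearMap.toMatrix b b (lam t : Matrix (Fin (N + 1)) (Fin (N + 1)) ℂ).mulVecLin
        = Matrix.diagonal (fun i => (t : ℂ) ^ (ℓ i)) := by
    intro t
    ext i j
    rw [LinearMap.toMatrix_apply, heig t j, _root_.map_smul, Module.Basis.repr_self]
    by_cases h : i = j
    · subst h; simp [Matrix.diagonal_apply_eq]
    · simp [Matrix.diagonal_apply_ne _ h, Finsupp.single_apply, Ne.symm h]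
  set Pm := stdb.toMatrix b with hPm
  set Qm := b.toMatrix stdb with hQm
  have hPQ : Pm * Qm = 1 := Module.Basis.toMatrix_mul_toMatrix_flip stdb b
  have hQP : Qm * Pm = 1 := Module.Basis.toMatrix_mul_toMatrix_flip b stdb
  have hconj : ∀ t : ℂˣ, (lam t : Matrix (Fin (N + 1)) (Fin (N + 1)) ℂ)
      = Pm * Matrix.diagonal (fun i => (t : ℂ) ^ (ℓ i)) * Qm := by
    intro t
    have h1 := basis_toMatrix_mul_linearMap_toMatrix_mul_basis_toMatrix stdb b stdb b
      ((lam t : Matrix (Fin (N + 1)) (Fin (N + 1)) ℂ).mulVecLin)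
    have h2 : LinearMap.toMatrix stdb stdb
        ((lam t : Matrix (Fin (N + 1)) (Fin (N + 1)) ℂ).mulVecLin)
        = (lam t : Matrix (Fin (N + 1)) (Fin (N + 1)) ℂ) := by
      rw [hstdb, LinearMap.toMatrix_eq_toMatrix', ← Matrix.toLin'_apply',
        LinearMap.toMatrix'_toLin']
    rw [← h2, ← h1, hdiag t]
  have hdetPQ : Pm.det * Qm.det = 1 := by rw [← Matrix.det_mul, hPQ, Matrix.det_one]
  have hQdet : Qm.det ≠ 0 := by
    intro h0
    rw [h0, mul_zero] at hdetPQ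
    exact zero_ne_one hdetPQ
  have hsum : ∑ i, ℓ i = 0 := by
    have h2u : ((2 : ℂ)) ≠ 0 := two_ne_zero
    have hdet := congrArg Matrix.det (hconj (Units.mk0 2 h2u))
    rw [(lam (Units.mk0 2 h2u)).2, Matrix.det_mul, Matrix.det_mul, Matrix.det_diagonal] at hdet
    have hprod : ∏ i, ((Units.mk0 (2:ℂ) h2u : ℂˣ) : ℂ) ^ ℓ i = (2 : ℂ) ^ (∑ i, ℓ i) := by
      simp only [Units.val_mk0]
      exact prod_zpow_sumC h2u Finset.univ ℓ
    rw [hprod] at hdet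
    have h4 : (2 : ℂ) ^ (∑ i, ℓ i) = 1 := by
      have := hdet
      calc (2 : ℂ) ^ (∑ i, ℓ i)
          = (Pm.det * Qm.det) * (2 : ℂ) ^ (∑ i, ℓ i) := by rw [hdetPQ, one_mul]
        _ = Pm.det * (2 : ℂ) ^ (∑ i, ℓ i) * Qm.det := by ring
        _ = 1 := this.symm
    have h5 : ((2 : ℝ)) ^ (∑ i, ℓ i) = (2 : ℝ) ^ (0 : ℤ) := by
      have := congrArg (fun z : ℂ => ‖z‖) h4
      rw [norm_zpow, norm_one, Complex.norm_two] at this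
      rw [this, zpow_zero]
    exact zpow_right_injective₀ (by norm_num) (by norm_num) h5
  obtain ⟨cc, hcc⟩ := IsAlgClosed.exists_pow_nat_eq (Qm.det)⁻¹ (n := N + 1) (by omega)
  have hccne : cc ≠ 0 := by
    intro h0
    rw [h0, zero_pow (by omega)] at hcc
    exact inv_ne_zero hQdet hcc.symm
  have hdetg : (cc • Qm).det = 1 := by
    rw [Matrix.det_smul, Fintype.card_fin, hcc]
    exact inv_mul_cancel₀ hQdet
  have hdetgi : (cc⁻¹ • Pm).det = 1 := by
    rw [Matrix.det_smul, Fintype.card_fin, inv_pow, hcc, inv_inv]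
    rw [mul_comm] at hdetPQ
    exact hdetPQ
  obtain ⟨g0, hg0⟩ : ∃ g0 : SL N,
      (g0 : Matrix (Fin (N + 1)) (Fin (N + 1)) ℂ) = cc • Qm := ⟨⟨cc • Qm, hdetg⟩, rfl⟩
  obtain ⟨gi0, hgi0⟩ : ∃ gi0 : SL N,
      (gi0 : Matrix (Fin (N + 1)) (Fin (N + 1)) ℂ) = cc⁻¹ • Pm := ⟨⟨cc⁻¹ • Pm, hdetgi⟩, rfl⟩
  have hgi : g0 * gi0 = 1 := by
    apply Subtype.ext
    rw [Matrix.SpecialLinearGroup.coe_mul, hg0, hgi0, Matrix.SpecialLinearGroup.coe_one]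
    rw [Matrix.smul_mul, Matrix.mul_smul, smul_smul, mul_inv_cancel₀ hccne, one_smul, hQP]
  have hginv : g0⁻¹ = gi0 := inv_eq_of_mul_eq_one_right hgi
  refine ⟨g0, ℓ, hsum, fun t => ?_⟩
  rw [hginv, hgi0, hg0]
  rw [hconj t, Matrix.smul_mul, Matrix.smul_mul, Matrix.mul_smul, smul_smul,
    inv_mul_cancel₀ hccne, one_smul]

private lemma polytope_bound {N : ℕ} (q : ℕ) (ℓ : Fin (N + 1) → ℤ) (hsum : ∑ i, ℓ i = 0)
    (m : ℤ) (hm : ∀ i, m ≤ ℓ i) (x : Fin N → ℝ) (hx : x ∈ (q : ℝ) • simplexNI N) :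
    (q : ℝ) * (m : ℝ) ≤ ∑ i, (ℓ (Fin.castSucc i) : ℝ) * x i := by
  classical
  set f : (Fin N → ℝ) → ℝ := fun y => ∑ i, (ℓ (Fin.castSucc i) : ℝ) * y i with hf
  have hlin : IsLinearMap ℝ f := by
    constructor
    · intro y z
      simp only [hf, Pi.add_apply, mul_add, Finset.sum_add_distrib]
    · intro cc y
      simp only [hf, Pi.smul_apply, smul_eq_mul, Finset.mul_sum]
      refine Finset.sum_congr rfl fun i _ => by ring
  rw [simplexNI, ← convexHull_smul] at hx
  have hq0 : (0 : ℝ) ≤ (q : ℝ) := Nat.cast_nonneg q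
  have hsubset : (q : ℝ) • (insert (fun _ => (-1 : ℝ))
        (Set.range fun i : Fin N => Pi.single i (1 : ℝ)))
      ⊆ {y : Fin N → ℝ | (q : ℝ) * (m : ℝ) ≤ f y} := by
    rintro y ⟨z, hz, rfl⟩
    have hsmul : f ((q : ℝ) • z) = (q : ℝ) * f z := hlin.map_smul (q : ℝ) z
    rw [Set.mem_setOf_eq, hsmul]
    rcases hz with rfl | ⟨j, rfl⟩
    · have hlast : ∑ i : Fin N, ℓ (Fin.castSucc i) + ℓ (Fin.last N) = 0 := by
        rw [← Fin.sum_univ_castSucc]; exact hsum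
      have hfz : f (fun _ => (-1 : ℝ)) = ((ℓ (Fin.last N) : ℤ) : ℝ) := by
        simp only [hf, mul_neg, mul_one, Finset.sum_neg_distrib]
        push_cast
        have : (∑ i : Fin N, (ℓ (Fin.castSucc i) : ℝ)) = -((ℓ (Fin.last N) : ℤ) : ℝ) := by
          have := congrArg (fun z : ℤ => (z : ℝ)) hlast
          push_cast at this
          linarith
        rw [this, neg_neg]
      rw [hfz]
      exact mul_le_mul_of_nonneg_left (by exact_mod_cast hm (Fin.last N)) hq0
    · have hfz : f (Pi.single j (1 : ℝ)) = ((ℓ (Fin.castSucc j) : ℤ) : ℝ) := by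
        simp only [hf, Pi.single_apply, mul_ite, mul_one, mul_zero]
        rw [Finset.sum_ite_eq' Finset.univ j (fun i => ((ℓ (Fin.castSucc i) : ℤ) : ℝ)),
          if_pos (Finset.mem_univ j)]
      rw [hfz]
      exact mul_le_mul_of_nonneg_left (by exact_mod_cast hm (Fin.castSucc j)) hq0
  exact convexHull_min hsubset (convex_halfSpace_ge hlin ((q : ℝ) * (m : ℝ))) hx

end StatementThreeAux


/-- Let `V` be a rational representation of `G` with torus weight
decomposition `(A, π)`, and let `q` be the smallest positive integer `k` with
`N(u) ⊆ k · N(I)` for every nonzero `u ∈ V`. Then `q · w_λ(I) ≤ w_λ(u)` for every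
one-parameter subgroup `λ` of `G` and every nonzero `u ∈ V`. -/
theorem statement3 (N : ℕ) (hN : 1 ≤ N) {V : Type} [NormedAddCommGroup V] [NormedSpace ℂ V]
    [FiniteDimensional ℂ V]
    (ρ : SL N →* (V ≃ₗ[ℂ] V)) (hρ : IsRational ρ)
    (A : Finset (Fin N → ℤ)) (π : (Fin N → ℤ) → (V →ₗ[ℂ] V))
    (hdec : IsWtDecomp ρ A π)
    (q : ℕ)
    (hq : IsLeast {k : ℕ | 0 < k ∧ ∀ u : V, u ≠ 0 →
      wtPolytope A π u ⊆ (k : ℝ) • simplexNI N} q)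
    (lam : ℂˣ →* SL N) (hlam : IsOneParam lam)
    (u : V) (hu : u ≠ 0) (wI wu : ℤ)
    (hwI : HasWeightI (fun t => lam t) wI)
    (hwu : HasWeight ρ (fun t => lam t) u wu) :
    (q : ℤ) * wI ≤ wu := by
  classical
  obtain ⟨g, ℓ, hsumℓ, hconj⟩ := oneparam_diag lam hlam
  -- the minimum of ℓ
  have hne : (Finset.image ℓ Finset.univ).Nonempty :=
    ⟨ℓ 0, Finset.mem_image_of_mem ℓ (Finset.mem_univ 0)⟩
  set m : ℤ := (Finset.image ℓ Finset.univ).min' hne with hmdef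
  have hmle : ∀ i, m ≤ ℓ i := fun i =>
    Finset.min'_le _ _ (Finset.mem_image_of_mem ℓ (Finset.mem_univ i))
  obtain ⟨k₀, -, hk₀⟩ := Finset.mem_image.mp ((Finset.image ℓ Finset.univ).min'_mem hne)
  set gm : Matrix (Fin (N + 1)) (Fin (N + 1)) ℂ := (g : Matrix (Fin (N + 1)) (Fin (N + 1)) ℂ)
    with hgm
  set gim : Matrix (Fin (N + 1)) (Fin (N + 1)) ℂ :=
    ((g⁻¹ : SL N) : Matrix (Fin (N + 1)) (Fin (N + 1)) ℂ) with hgim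
  have hgg : gm * gim = 1 := by
    rw [hgm, hgim, ← Matrix.SpecialLinearGroup.coe_mul, mul_inv_cancel]
    rfl
  have higg : gim * gm = 1 := by
    rw [hgm, hgim, ← Matrix.SpecialLinearGroup.coe_mul, inv_mul_cancel]
    rfl
  -- step 1 : wI ≤ m
  have hwIm : wI ≤ m := by
    set E : Fin (N + 1) → Matrix (Fin (N + 1)) (Fin (N + 1)) ℂ :=
      fun k => Matrix.of fun i j => gim i k * gm k j with hE
    have hlamE : ∀ t : ℂˣ, (lam t : Matrix (Fin (N + 1)) (Fin (N + 1)) ℂ)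
        = ∑ k, ((t : ℂ) ^ (ℓ k)) • E k := by
      intro t
      rw [hconj t, Matrix.mul_assoc]
      ext i j
      rw [Matrix.mul_apply]
      rw [show (∑ k, ((t : ℂ) ^ (ℓ k)) • E k) i j
          = ∑ k, (t : ℂ) ^ (ℓ k) * (gim i k * gm k j) from by
        simp [Matrix.sum_apply, hE]]
      refine Finset.sum_congr rfl fun k _ => ?_
      rw [Matrix.diagonal_mul]
      ring
    obtain ⟨M₀, hM₀, hMlim⟩ := hwI
    refine weight_ub Finset.univ ℓ E m wI (fun a _ => hmle a) ?_ M₀ hM₀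
      (Tendsto.congr (fun t => by rw [hlamE t]) hMlim)
    -- the coefficient of the minimal exponent is nonzero
    intro h0
    set ind : Fin (N + 1) → ℂ := fun k => if ℓ k = m then 1 else 0 with hind
    have hCeq : ∑ k ∈ Finset.univ.filter (fun k => ℓ k = m), E k
        = gim * Matrix.diagonal ind * gm := by
      ext i j
      rw [Matrix.mul_assoc, Matrix.mul_apply]
      rw [show (∑ k ∈ Finset.univ.filter (fun k => ℓ k = m), E k) i j
          = ∑ k ∈ Finset.univ.filter (fun k => ℓ k = m), gim i k * gm k j from by
        simp [Matrix.sum_apply, hE]]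
      rw [Finset.sum_filter]
      refine Finset.sum_congr rfl fun k _ => ?_
      rw [Matrix.diagonal_mul]
      simp only [hind]
      split_ifs with h
      · ring
      · ring
    rw [hCeq] at h0
    have hD0 : Matrix.diagonal ind = 0 := by
      calc Matrix.diagonal ind
          = (gm * gim) * Matrix.diagonal ind * (gm * gim) := by rw [hgg, one_mul, mul_one]
        _ = gm * (gim * Matrix.diagonal ind * gm) * gim := by
            simp only [Matrix.mul_assoc]
        _ = 0 := by rw [h0, Matrix.mul_zero, Matrix.zero_mul]
    have := congrFun (congrFun hD0 k₀) k₀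
    rw [Matrix.diagonal_apply_eq, Matrix.zero_apply] at this
    rw [hind] at this
    simp only [hk₀, if_pos] at this
    exact (one_ne_zero : (1:ℂ) ≠ 0) (by simpa [hmdef] using this)
  -- step 2 : representation side
  set u' : V := ρ g u with hu'def
  have hu' : u' ≠ 0 := by
    intro h0
    apply hu
    have : (ρ g⁻¹) ((ρ g) u) = u := by
      rw [show (ρ g⁻¹) ((ρ g) u) = ((ρ g⁻¹) * (ρ g)) u from rfl, ← _root_.map_mul,
        inv_mul_cancel, _root_.map_one ρ]
      rfl
    rw [← this, ← hu'def, h0, map_zero]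
  set ℓ' : Fin N → ℤ := fun i => ℓ (Fin.castSucc i) with hl'
  set e : (Fin N → ℤ) → ℤ := fun a => ∑ i, ℓ' i * a i with he
  -- lam t in terms of the torus
  have hdiagfun : ∀ t : ℂˣ, (Fin.snoc (fun i : Fin N => ((t ^ (ℓ' i) : ℂˣ) : ℂ))
      ((∏ i : Fin N, ((t ^ (ℓ' i) : ℂˣ) : ℂ))⁻¹) : Fin (N + 1) → ℂ)
      = fun i => (t : ℂ) ^ ℓ i := by
    intro t
    funext i
    refine Fin.lastCases ?_ ?_ i
    · rw [Fin.snoc_last]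
      have h1 : ∏ i : Fin N, ((t ^ (ℓ' i) : ℂˣ) : ℂ) = (t : ℂ) ^ (∑ i : Fin N, ℓ' i) := by
        rw [show (∏ i : Fin N, ((t ^ (ℓ' i) : ℂˣ) : ℂ)) = ∏ i : Fin N, (t : ℂ) ^ (ℓ' i) from
          Finset.prod_congr rfl fun i _ => Units.val_zpow_eq_zpow_val t (ℓ' i)]
        exact prod_zpow_sumC t.ne_zero Finset.univ ℓ'
      have h2 : ∑ i : Fin N, ℓ' i = - ℓ (Fin.last N) := by
        have h3 := hsumℓ
        rw [Fin.sum_univ_castSucc] at h3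
        simp only [hl']
        omega
      rw [h1, h2, _root_.zpow_neg, inv_inv]
    · intro i
      rw [Fin.snoc_castSucc]
      exact Units.val_zpow_eq_zpow_val t (ℓ' i)
  have htorusmat : ∀ t : ℂˣ, ((torusElem N fun i => t ^ (ℓ' i) : SL N) :
      Matrix (Fin (N + 1)) (Fin (N + 1)) ℂ) = Matrix.diagonal (fun i => (t : ℂ) ^ ℓ i) := by
    intro t
    exact congrArg Matrix.diagonal (hdiagfun t)
  have htorus : ∀ t : ℂˣ, lam t = g⁻¹ * torusElem N (fun i => t ^ (ℓ' i)) * g := by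
    intro t
    apply Subtype.ext
    rw [Matrix.SpecialLinearGroup.coe_mul, Matrix.SpecialLinearGroup.coe_mul,
      htorusmat t, hconj t]
  have hrepu : ∀ t : ℂˣ, (ρ (lam t)) u
      = ∑ a ∈ A, ((t : ℂ) ^ (e a)) • ((ρ g⁻¹) (π a u')) := by
    intro t
    rw [htorus t, _root_.map_mul, _root_.map_mul]
    rw [show ((ρ g⁻¹) * (ρ (torusElem N fun i => t ^ (ℓ' i))) * (ρ g)) u
      = (ρ g⁻¹) ((ρ (torusElem N fun i => t ^ (ℓ' i))) ((ρ g) u)) from rfl]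
    rw [← hu'def]
    conv_lhs => rw [← hdec.1 u']
    rw [map_sum, map_sum]
    refine Finset.sum_congr rfl fun a ha => ?_
    rw [hdec.2 a ha, _root_.map_smul]
    congr 1
    calc ∏ i, ((t ^ (ℓ' i) : ℂˣ) : ℂ) ^ (a i)
        = ∏ i, ((t ^ (ℓ' i * a i) : ℂˣ) : ℂ) := by
          refine Finset.prod_congr rfl fun i _ => ?_
          rw [← Units.val_zpow_eq_zpow_val, ← _root_.zpow_mul]
      _ = ((∏ i, t ^ (ℓ' i * a i) : ℂˣ) : ℂ) := by
          rw [show ((∏ i, t ^ (ℓ' i * a i) : ℂˣ) : ℂ)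
              = (Units.coeHom ℂ) (∏ i, t ^ (ℓ' i * a i)) from rfl, map_prod]
          rfl
      _ = (t : ℂ) ^ (e a) := by
          rw [prod_zpow_sumG, Units.val_zpow_eq_zpow_val, he]
  -- conclude via weight_lb
  obtain ⟨v₀, hv₀, hlim⟩ := hwu
  refine weight_lb A e (fun a => (ρ g⁻¹) (π a u')) ((q : ℤ) * wI) wu ?_ v₀ hv₀
    (Tendsto.congr (fun t => by rw [hrepu t]) hlim)
  intro a ha hva
  have hπ : π a u' ≠ 0 := fun h => hva (by show (ρ g⁻¹) (π a u') = 0; rw [h, map_zero])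
  have hmem : (fun i => ((a i : ℤ) : ℝ)) ∈ wtPolytope A π u' :=
    subset_convexHull ℝ _ (Set.mem_image_of_mem _ ⟨ha, hπ⟩)
  have hsub := hq.1.2 u' hu' hmem
  have hb := polytope_bound q ℓ hsumℓ m hmle _ hsub
  have hcast : (((q : ℤ) * m : ℤ) : ℝ) ≤ ((e a : ℤ) : ℝ) := by
    push_cast
    rw [he]
    push_cast
    exact hb
  have h1 : (q : ℤ) * m ≤ e a := by exact_mod_cast hcast
  have h2 : (q : ℤ) * wI ≤ (q : ℤ) * m :=
    mul_le_mul_of_nonneg_left hwIm (by positivity)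
  omega
end
end

section
/- Let V and W be rational representations of G, and let v ∈ V∖{0} and w ∈ W∖{0}. Then (v, w) is uniformly K-stable if and only if there exists a positive integer m such that for every σ ∈ G one has the Minkowski-sum inclusion (1 − 1/m)·N(ρ_V(σ)v) + (1/m)·deg(V)·N(I) ⊆ N(ρ_W(σ)w) in ℝ^N. -/
open Filter Topology Matrix Set Pointwise

noncomputable section

section Helpers

variable {N : ℕ}

/-! ### zeroFilter basics -/

lemma zeroFilter_neBot_s15 : zeroFilter.NeBot := by
  refine Filter.comap_neBot (fun t ht => ?_)
  have h1 : ({z : ℂ | z ≠ 0} : Set ℂ) ∈ 𝓝[≠] (0:ℂ) := self_mem_nhdsWithin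
  have := Filter.inter_mem ht h1
  obtain ⟨z, hz⟩ := Filter.nonempty_of_mem this
  exact ⟨Units.mk0 z hz.2, hz.1⟩

lemma tendsto_val_zeroFilter : Filter.Tendsto (Units.val : ℂˣ → ℂ) zeroFilter (𝓝 0) :=
  (Filter.tendsto_comap).mono_right nhdsWithin_le_nhds

lemma tendsto_zpow_zeroFilter {k : ℤ} (hk : 0 < k) :
    Filter.Tendsto (fun t : ℂˣ => (t : ℂ) ^ k) zeroFilter (𝓝 0) := by
  obtain ⟨n, rfl⟩ := Int.eq_ofNat_of_zero_le hk.le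
  have hn : n ≠ 0 := by rintro rfl; simp at hk
  have h : Filter.Tendsto (fun z : ℂ => z ^ n) (𝓝 0) (𝓝 0) := by
    simpa [zero_pow hn] using (continuous_pow n (M := ℂ)).tendsto (0 : ℂ)
  have := h.comp tendsto_val_zeroFilter
  simpa [Function.comp_def, zpow_natCast] using this

/-! ### Weight uniqueness -/

lemma weight_lt_aux {V : Type*} [NormedAddCommGroup V] [NormedSpace ℂ V]
    {f : ℂˣ → V} {w w' : ℤ} (hww : w < w') {a b : V}
    (ha : Filter.Tendsto (fun t : ℂˣ => ((t:ℂ) ^ (-w)) • f t) zeroFilter (𝓝 a))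
    (hb : Filter.Tendsto (fun t : ℂˣ => ((t:ℂ) ^ (-w')) • f t) zeroFilter (𝓝 b)) :
    a = 0 := by
  have := zeroFilter_neBot_s15
  have key : Filter.Tendsto (fun t : ℂˣ => ((t:ℂ) ^ (w' - w)) • (((t:ℂ) ^ (-w')) • f t))
      zeroFilter (𝓝 ((0:ℂ) • b)) :=
    (tendsto_zpow_zeroFilter (by omega)).smul hb
  have heq : (fun t : ℂˣ => ((t:ℂ) ^ (w' - w)) • (((t:ℂ) ^ (-w')) • f t))
      = fun t : ℂˣ => ((t:ℂ) ^ (-w)) • f t := by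
    funext t
    rw [smul_smul, ← zpow_add₀ (Units.ne_zero t)]
    ring_nf
  rw [heq] at key
  simpa using (tendsto_nhds_unique ha key)

lemma hasWeight_unique {V : Type*} [NormedAddCommGroup V] [NormedSpace ℂ V]
    {ρ : SL N →* (V ≃ₗ[ℂ] V)} {lam : ℂˣ → SL N} {u : V} {w w' : ℤ}
    (h : HasWeight ρ lam u w) (h' : HasWeight ρ lam u w') : w = w' := by
  obtain ⟨a, ha0, ha⟩ := h
  obtain ⟨b, hb0, hb⟩ := h'
  rcases lt_trichotomy w w' with hlt | heq | hgt
  · exact absurd (weight_lt_aux hlt ha hb) ha0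
  · exact heq
  · exact absurd (weight_lt_aux hgt hb ha) hb0

lemma hasWeightI_unique {lam : ℂˣ → SL N} {w w' : ℤ}
    (h : HasWeightI lam w) (h' : HasWeightI lam w') : w = w' := by
  obtain ⟨a, ha0, ha⟩ := h
  obtain ⟨b, hb0, hb⟩ := h'
  have entry : ∀ (M : Matrix (Fin (N+1)) (Fin (N+1)) ℂ) (k : ℤ)
      (hM : Filter.Tendsto (fun t : ℂˣ => ((t:ℂ) ^ (-k)) •
        ((lam t : Matrix (Fin (N+1)) (Fin (N+1)) ℂ))) zeroFilter (𝓝 M)) (i j : Fin (N+1)),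
      Filter.Tendsto (fun t : ℂˣ => ((t:ℂ) ^ (-k)) •
        ((lam t : Matrix (Fin (N+1)) (Fin (N+1)) ℂ) i j)) zeroFilter (𝓝 (M i j)) := by
    intro M k hM i j
    have hc : Continuous (fun X : Matrix (Fin (N+1)) (Fin (N+1)) ℂ => X i j) :=
      ((continuous_apply j).comp (continuous_apply i))
    have := (hc.tendsto M).comp hM
    simpa [Function.comp_def] using this
  rcases lt_trichotomy w w' with hlt | heq | hgt
  · obtain ⟨i, j, hij⟩ : ∃ i j, a i j ≠ 0 := by
      by_contra hcon
      push_neg at hcon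
      exact ha0 (by funext i j; exact hcon i j)
    exact absurd (weight_lt_aux hlt (entry a w ha i j) (entry b w' hb i j)) hij
  · exact heq
  · obtain ⟨i, j, hij⟩ : ∃ i j, b i j ≠ 0 := by
      by_contra hcon
      push_neg at hcon
      exact hb0 (by funext i j; exact hcon i j)
    exact absurd (weight_lt_aux hgt (entry b w' hb i j) (entry a w ha i j)) hij

end Helpers
section Chars

variable {N : ℕ}

/-! ### Character independence -/

lemma char_sum_eq_zero {G : Type*} [Monoid G] {ι : Type*} {χ : ι → (G →* ℂ)}
    (hχ : Function.Injective χ) (S : Finset ι) {V : Type*} [AddCommGroup V] [Module ℂ V]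
    (x : ι → V) (h : ∀ g : G, ∑ a ∈ S, χ a g • x a = 0) : ∀ a ∈ S, x a = 0 := by
  intro a ha
  rw [← Module.forall_dual_apply_eq_zero_iff ℂ]
  intro φ
  have li : LinearIndependent ℂ (fun i : ι => ((χ i : G → ℂ))) :=
    (linearIndependent_monoidHom G ℂ).comp χ hχ
  have hsum : ∑ i ∈ S, (φ (x i)) • ((χ i : G → ℂ)) = 0 := by
    funext g
    have := congrArg φ (h g)
    simpa [map_sum, Finset.sum_apply, smul_eq_mul, mul_comm] using this
  exact linearIndependent_iff'.mp li S (fun i => φ (x i)) hsum a ha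

/-- The character `s ↦ ∏ i, (s i)^(a i)` of the torus `(ℂˣ)^N`, valued in `ℂˣ`. -/
def torusCharU (a : Fin N → ℤ) : (Fin N → ℂˣ) →* ℂˣ where
  toFun s := ∏ i, (s i) ^ (a i)
  map_one' := by simp
  map_mul' s t := by
    simp [mul_zpow, Finset.prod_mul_distrib]

/-- The character `s ↦ ∏ i, (s i)^(a i)` of the torus `(ℂˣ)^N`. -/
def torusChar (a : Fin N → ℤ) : (Fin N → ℂˣ) →* ℂ :=
  (Units.coeHom ℂ).comp (torusCharU a)

lemma torusChar_apply (a : Fin N → ℤ) (s : Fin N → ℂˣ) :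
    torusChar a s = ∏ i, ((s i : ℂ)) ^ (a i) := by
  simp [torusChar, torusCharU, Units.val_zpow_eq_zpow_val]

lemma two_zpow_injective : Function.Injective (fun n : ℤ => (2 : ℂ) ^ n) := by
  intro n m hnm
  have h : (2:ℝ) ^ n = (2:ℝ) ^ m := by
    have := congrArg norm hnm
    simpa [norm_zpow] using this
  exact zpow_right_injective₀ (by norm_num) (by norm_num) h

lemma torusChar_injective : Function.Injective (torusChar (N := N)) := by
  intro a b hab
  funext i
  have h : torusChar a (Function.update (1 : Fin N → ℂˣ) i (Units.mk0 (2:ℂ) two_ne_zero))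
      = torusChar b (Function.update (1 : Fin N → ℂˣ) i (Units.mk0 (2:ℂ) two_ne_zero)) := by
    rw [hab]
  rw [torusChar_apply, torusChar_apply] at h
  have ha : ∀ c : Fin N → ℤ, (∏ j, ((Function.update (1 : Fin N → ℂˣ) i
      (Units.mk0 (2:ℂ) two_ne_zero) j : ℂ)) ^ (c j)) = (2:ℂ) ^ (c i) := by
    intro c
    rw [Finset.prod_eq_single i]
    · simp
    · intro j _ hj
      simp [Function.update_of_ne hj]
    · simp
  rw [ha a, ha b] at h
  exact two_zpow_injective h

/-- The character `(t,s) ↦ t^k s^l` of `ℂˣ × ℂˣ`. -/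
def pairChar (kl : ℤ × ℤ) : (ℂˣ × ℂˣ) →* ℂ :=
  (Units.coeHom ℂ).comp
    { toFun := fun p => p.1 ^ kl.1 * p.2 ^ kl.2
      map_one' := by simp
      map_mul' := fun p q => by
        simp only [Prod.fst_mul, Prod.snd_mul, mul_zpow]
        rw [mul_mul_mul_comm] }

lemma pairChar_apply (kl : ℤ × ℤ) (p : ℂˣ × ℂˣ) :
    pairChar kl p = ((p.1 : ℂ)) ^ kl.1 * ((p.2 : ℂ)) ^ kl.2 := by
  simp [pairChar, Units.val_zpow_eq_zpow_val]

lemma pairChar_injective : Function.Injective pairChar := by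
  intro k l hkl
  have h2 : ∀ z : ℤ × ℤ, pairChar z (Units.mk0 (2:ℂ) two_ne_zero, 1) = (2:ℂ) ^ z.1 := by
    intro z; rw [pairChar_apply]; simp
  have h2' : ∀ z : ℤ × ℤ, pairChar z (1, Units.mk0 (2:ℂ) two_ne_zero) = (2:ℂ) ^ z.2 := by
    intro z; rw [pairChar_apply]; simp
  have e1 : pairChar k (Units.mk0 (2:ℂ) two_ne_zero, 1)
      = pairChar l (Units.mk0 (2:ℂ) two_ne_zero, 1) := by rw [hkl]
  have e2 : pairChar k (1, Units.mk0 (2:ℂ) two_ne_zero)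
      = pairChar l (1, Units.mk0 (2:ℂ) two_ne_zero) := by rw [hkl]
  rw [h2 k, h2 l] at e1
  rw [h2' k, h2' l] at e2
  exact Prod.ext (two_zpow_injective e1) (two_zpow_injective e2)

end Chars
section Torus

variable {N : ℕ}

lemma zpow_finset_sum {G : Type*} [CommGroup G] {ι : Type*} (t : G) (s : Finset ι) (f : ι → ℤ) :
    t ^ (∑ i ∈ s, f i) = ∏ i ∈ s, t ^ f i := by
  classical
  induction s using Finset.induction_on with
  | empty => simp
  | insert _ _ h ih => rw [Finset.sum_insert h, Finset.prod_insert h, _root_.zpow_add, ih]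

lemma torusElem_coe (t : Fin N → ℂˣ) :
    (torusElem N t : Matrix (Fin (N+1)) (Fin (N+1)) ℂ)
      = Matrix.diagonal (Fin.snoc (fun i => (t i : ℂ)) ((∏ i, (t i : ℂ))⁻¹)) := rfl

lemma snoc_mul (f g : Fin N → ℂ) (a b : ℂ) :
    (Fin.snoc f a : Fin (N+1) → ℂ) * (Fin.snoc g b) = Fin.snoc (f * g) (a * b) := by
  funext j
  refine Fin.lastCases ?_ ?_ j <;> simp

lemma torusElem_mul (t s : Fin N → ℂˣ) :
    torusElem N t * torusElem N s = torusElem N (t * s) := by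
  apply Subtype.ext
  rw [Matrix.SpecialLinearGroup.coe_mul]
  rw [torusElem_coe, torusElem_coe, torusElem_coe, Matrix.diagonal_mul_diagonal]
  have h : (fun i => (Fin.snoc (fun i => (t i : ℂ)) ((∏ i, (t i : ℂ))⁻¹) : Fin (N+1) → ℂ) i *
      (Fin.snoc (fun i => (s i : ℂ)) ((∏ i, (s i : ℂ))⁻¹) : Fin (N+1) → ℂ) i)
      = (Fin.snoc (fun i => ((t * s) i : ℂ)) ((∏ i, ((t * s) i : ℂ))⁻¹) : Fin (N+1) → ℂ) := by
    funext j
    refine Fin.lastCases ?_ ?_ j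
    · simp only [Fin.snoc_last]
      rw [← mul_inv, ← Finset.prod_mul_distrib]
      simp
    · intro i; simp
  rw [h]

lemma torusElem_one : torusElem N 1 = 1 := by
  apply Subtype.ext
  rw [Matrix.SpecialLinearGroup.coe_one, torusElem_coe, ← Matrix.diagonal_one]
  have h : (Fin.snoc (fun i => ((1 : Fin N → ℂˣ) i : ℂ)) ((∏ i, ((1 : Fin N → ℂˣ) i : ℂ))⁻¹) : Fin (N+1) → ℂ)
      = fun _ => (1:ℂ) := by
    funext j
    refine Fin.lastCases ?_ ?_ j <;> simp
  rw [h]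

/-- The torus one-parameter subgroup `t ↦ diag(t^{ℓ₁},…,t^{ℓ_N}, t^{-∑ℓ})`. -/
def lamT (ℓ : Fin N → ℤ) : ℂˣ →* SL N where
  toFun t := torusElem N (fun i => t ^ ℓ i)
  map_one' := by simp only [_root_.one_zpow]; exact torusElem_one
  map_mul' t s := by
    show torusElem N (fun i => (t*s) ^ ℓ i) = torusElem N (fun i => t ^ ℓ i) * torusElem N (fun i => s ^ ℓ i)
    rw [torusElem_mul]
    congr 1 <;> · funext i; simp [mul_zpow]

lemma lamT_coe (ℓ : Fin N → ℤ) (t : ℂˣ) :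
    ((lamT ℓ t : SL N) : Matrix (Fin (N+1)) (Fin (N+1)) ℂ)
      = Matrix.diagonal (fun j => (t : ℂ) ^ ((Fin.snoc ℓ (-(∑ i, ℓ i)) : Fin (N+1) → ℤ) j)) := by
  rw [show (lamT ℓ t : SL N) = torusElem N (fun i => t ^ ℓ i) from rfl, torusElem_coe]
  have h : (Fin.snoc (fun i => ((t ^ ℓ i : ℂˣ) : ℂ)) ((∏ i, ((t ^ ℓ i : ℂˣ) : ℂ))⁻¹) : Fin (N+1) → ℂ)
      = fun j => (t : ℂ) ^ ((Fin.snoc ℓ (-(∑ i, ℓ i)) : Fin (N+1) → ℤ) j) := by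
    funext j
    refine Fin.lastCases ?_ ?_ j
    · simp only [Fin.snoc_last]
      have : (∏ i, ((t ^ ℓ i : ℂˣ) : ℂ)) = ((∏ i, t ^ ℓ i : ℂˣ) : ℂ) :=
        (map_prod (Units.coeHom ℂ) _ _).symm
      rw [this, ← zpow_finset_sum, _root_.zpow_neg]
      simp [Units.val_zpow_eq_zpow_val]
    · intro i
      simp [Units.val_zpow_eq_zpow_val]
  rw [h]

end Torus
section Weights

variable {N : ℕ} {V : Type*} [NormedAddCommGroup V] [NormedSpace ℂ V]

lemma linEquiv_mul_apply (e f : V ≃ₗ[ℂ] V) (x : V) : (e * f) x = e (f x) := rfl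

lemma rho_conj_apply {ρ : SL N →* (V ≃ₗ[ℂ] V)} (σ g : SL N) (u : V) :
    ρ (σ * g * σ⁻¹) u = ρ σ (ρ g (ρ σ⁻¹ u)) := by
  rw [_root_.map_mul, _root_.map_mul, linEquiv_mul_apply, linEquiv_mul_apply]

lemma rho_lamT_apply {ρ : SL N →* (V ≃ₗ[ℂ] V)} {A : Finset (Fin N → ℤ)}
    {π : (Fin N → ℤ) → (V →ₗ[ℂ] V)} (hdec : IsWtDecomp ρ A π)
    (ℓ : Fin N → ℤ) (u : V) (t : ℂˣ) :
    ρ (lamT ℓ t) u = ∑ a ∈ A, ((t : ℂ) ^ (∑ i, ℓ i * a i)) • π a u := by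
  conv_lhs => rw [← hdec.1 u, map_sum]
  refine Finset.sum_congr rfl (fun a ha => ?_)
  rw [show lamT ℓ t = torusElem N (fun i => t ^ ℓ i) from rfl, hdec.2 a ha]
  congr 1
  have h1 : ∀ i, ((t ^ ℓ i : ℂˣ) : ℂ) ^ (a i) = ((t ^ (ℓ i * a i) : ℂˣ) : ℂ) := by
    intro i
    rw [Units.val_zpow_eq_zpow_val, Units.val_zpow_eq_zpow_val]
    exact (_root_.zpow_mul _ _ _).symm
  simp_rw [h1]
  rw [show (∏ i, ((t ^ (ℓ i * a i) : ℂˣ) : ℂ)) = ((∏ i, t ^ (ℓ i * a i) : ℂˣ) : ℂ) from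
    (map_prod (Units.coeHom ℂ) _ _).symm, ← zpow_finset_sum, Units.val_zpow_eq_zpow_val]

lemma wtSupp_subset {A : Finset (Fin N → ℤ)} {π : (Fin N → ℤ) → (V →ₗ[ℂ] V)} (u : V) :
    wtSupp A π u ⊆ ↑A := fun a ha => ha.1

lemma wtSupp_finite {A : Finset (Fin N → ℤ)} {π : (Fin N → ℤ) → (V →ₗ[ℂ] V)} (u : V) :
    (wtSupp A π u).Finite := A.finite_toSet.subset (wtSupp_subset u)

lemma wtSupp_nonempty {ρ : SL N →* (V ≃ₗ[ℂ] V)} {A : Finset (Fin N → ℤ)}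
    {π : (Fin N → ℤ) → (V →ₗ[ℂ] V)} (hdec : IsWtDecomp ρ A π) {u : V} (hu : u ≠ 0) :
    (wtSupp A π u).Nonempty := by
  by_contra h
  rw [Set.not_nonempty_iff_eq_empty] at h
  refine hu ?_
  rw [← hdec.1 u]
  refine Finset.sum_eq_zero (fun a ha => ?_)
  by_contra hne
  have : a ∈ wtSupp A π u := ⟨ha, hne⟩
  rw [h] at this
  exact this

lemma wtT_mem {ρ : SL N →* (V ≃ₗ[ℂ] V)} {A : Finset (Fin N → ℤ)}
    {π : (Fin N → ℤ) → (V →ₗ[ℂ] V)} (hdec : IsWtDecomp ρ A π) (ℓ : Fin N → ℤ)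
    {u : V} (hu : u ≠ 0) :
    wtT A π ℓ u ∈ (fun a : Fin N → ℤ => ∑ i, ℓ i * a i) '' wtSupp A π u :=
  Int.csInf_mem ((wtSupp_nonempty hdec hu).image _) (((wtSupp_finite u).image _).bddBelow)

lemma wtT_le {A : Finset (Fin N → ℤ)} {π : (Fin N → ℤ) → (V →ₗ[ℂ] V)} (ℓ : Fin N → ℤ)
    {u : V} {a : Fin N → ℤ} (ha : a ∈ wtSupp A π u) :
    wtT A π ℓ u ≤ ∑ i, ℓ i * a i :=
  csInf_le (((wtSupp_finite u).image _).bddBelow) (Set.mem_image_of_mem _ ha)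

lemma hasWeight_lamT {ρ : SL N →* (V ≃ₗ[ℂ] V)} {A : Finset (Fin N → ℤ)}
    {π : (Fin N → ℤ) → (V →ₗ[ℂ] V)} (hdec : IsWtDecomp ρ A π) (ℓ : Fin N → ℤ)
    {u : V} (hu : u ≠ 0) :
    HasWeight ρ (fun t => lamT ℓ t) u (wtT A π ℓ u) := by
  classical
  set e : (Fin N → ℤ) → ℤ := fun a => ∑ i, ℓ i * a i with he
  set w : ℤ := wtT A π ℓ u with hw
  set X : V := ∑ a ∈ A.filter (fun a => e a = w ∧ π a u ≠ 0), π a u with hX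
  have hXne : X ≠ 0 := by
    intro hX0
    obtain ⟨a₀, ha₀, ha₀w⟩ := wtT_mem hdec ℓ hu
    have hmem : a₀ ∈ A.filter (fun a => e a = w ∧ π a u ≠ 0) := by
      rw [Finset.mem_filter]
      exact ⟨ha₀.1, ha₀w, ha₀.2⟩
    refine ha₀.2 ?_
    refine char_sum_eq_zero torusChar_injective (A.filter (fun a => e a = w ∧ π a u ≠ 0))
      (fun a => π a u) (fun s => ?_) a₀ hmem
    have h2 : ∑ x ∈ A.filter (fun a => e a = w ∧ π a u ≠ 0), torusChar x s • π x u
        = ρ (torusElem N s) X := by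
      rw [hX, map_sum]
      refine Finset.sum_congr rfl (fun x hx => ?_)
      rw [hdec.2 x (Finset.mem_filter.mp hx).1 s u, torusChar_apply]
    rw [h2, hX0, map_zero]
  refine ⟨X, hXne, ?_⟩
  have heq : (fun t : ℂˣ => ((t:ℂ) ^ (-w)) • (ρ (lamT ℓ t) u))
      = fun t : ℂˣ => ∑ a ∈ A, ((t:ℂ) ^ (e a - w)) • π a u := by
    funext t
    rw [rho_lamT_apply hdec ℓ u t, Finset.smul_sum]
    refine Finset.sum_congr rfl (fun a _ => ?_)
    rw [smul_smul, ← zpow_add₀ (Units.ne_zero t)]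
    ring_nf
    rfl
  rw [heq]
  have hXsum : X = ∑ a ∈ A, (if e a = w ∧ π a u ≠ 0 then π a u else 0) := by
    rw [hX, Finset.sum_filter]
  rw [hXsum]
  refine tendsto_finset_sum _ (fun a ha => ?_)
  by_cases hz : π a u = 0
  · simpa [hz] using tendsto_const_nhds
  · have haw : a ∈ wtSupp A π u := ⟨ha, hz⟩
    have hge : w ≤ e a := wtT_le ℓ haw
    by_cases hew : e a = w
    · have hfun : (fun t : ℂˣ => ((t:ℂ) ^ (e a - w)) • π a u) = fun _ => π a u := by
        funext t; rw [hew, sub_self, zpow_zero, one_smul]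
      rw [hfun, if_pos ⟨hew, hz⟩]
      exact tendsto_const_nhds
    · rw [if_neg (by tauto)]
      have hgt : 0 < e a - w := by omega
      have := (tendsto_zpow_zeroFilter hgt).smul_const (π a u)
      simpa using this

lemma hasWeight_conj [FiniteDimensional ℂ V] {ρ : SL N →* (V ≃ₗ[ℂ] V)}
    {A : Finset (Fin N → ℤ)} {π : (Fin N → ℤ) → (V →ₗ[ℂ] V)} (hdec : IsWtDecomp ρ A π)
    (σ : SL N) (ℓ : Fin N → ℤ) {u : V} (hu : u ≠ 0) :
    HasWeight ρ (fun t => σ * lamT ℓ t * σ⁻¹) u (wtT A π ℓ (ρ σ⁻¹ u)) := by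
  have hu' : ρ σ⁻¹ u ≠ 0 := by
    simp only [ne_eq, LinearEquiv.map_eq_zero_iff]
    exact hu
  obtain ⟨X, hXne, hlim⟩ := hasWeight_lamT hdec ℓ hu'
  have hcont : Continuous (ρ σ) :=
    LinearMap.continuous_of_finiteDimensional ((ρ σ : V ≃ₗ[ℂ] V) : V →ₗ[ℂ] V)
  refine ⟨ρ σ X, by simp only [ne_eq, LinearEquiv.map_eq_zero_iff]; exact hXne, ?_⟩
  have heq : (fun t : ℂˣ => ((t:ℂ) ^ (-(wtT A π ℓ (ρ σ⁻¹ u)))) • (ρ (σ * lamT ℓ t * σ⁻¹) u))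
      = fun t : ℂˣ => ρ σ (((t:ℂ) ^ (-(wtT A π ℓ (ρ σ⁻¹ u)))) • (ρ (lamT ℓ t) (ρ σ⁻¹ u))) := by
    funext t
    rw [rho_conj_apply, _root_.map_smul]
  rw [heq]
  exact (hcont.tendsto X).comp hlim

end Weights
section WeightI

variable {N : ℕ}

/-- Exponents of the diagonal torus 1-PS, as a function on `Fin (N+1)`. -/
def snocExp (ℓ : Fin N → ℤ) : Fin (N+1) → ℤ := Fin.snoc ℓ (-(∑ i, ℓ i))

lemma wIT_eq_sInf_range (ℓ : Fin N → ℤ) : wIT ℓ = sInf (Set.range (snocExp ℓ)) := by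
  unfold wIT
  congr 1
  ext x
  constructor
  · rintro (h | ⟨i, rfl⟩)
    · exact ⟨Fin.last N, by simp [snocExp, h]⟩
    · exact ⟨Fin.castSucc i, by simp [snocExp]⟩
  · rintro ⟨j, rfl⟩
    refine Fin.lastCases ?_ ?_ j
    · left; simp [snocExp]
    · intro i; right; exact ⟨i, by simp [snocExp]⟩

lemma wIT_le (ℓ : Fin N → ℤ) (j : Fin (N+1)) : wIT ℓ ≤ snocExp ℓ j := by
  rw [wIT_eq_sInf_range]
  exact csInf_le (Set.finite_range _).bddBelow ⟨j, rfl⟩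

lemma wIT_mem (ℓ : Fin N → ℤ) : ∃ j, snocExp ℓ j = wIT ℓ := by
  rw [wIT_eq_sInf_range]
  exact Int.csInf_mem (Set.range_nonempty _) (Set.finite_range _).bddBelow

lemma hasWeightI_conj (σ : SL N) (ℓ : Fin N → ℤ) :
    HasWeightI (fun t : ℂˣ => σ * lamT ℓ t * σ⁻¹) (wIT ℓ) := by
  classical
  set w := wIT ℓ with hw
  set D₀ : Matrix (Fin (N+1)) (Fin (N+1)) ℂ :=
    Matrix.diagonal (fun j => if snocExp ℓ j = w then (1:ℂ) else 0) with hD₀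
  have hD₀ne : D₀ ≠ 0 := by
    obtain ⟨j₀, hj₀⟩ := wIT_mem ℓ
    intro h0
    have := congrFun (congrFun h0 j₀) j₀
    rw [hD₀] at this
    simp only [Matrix.diagonal_apply_eq, hj₀, if_true, Matrix.zero_apply] at this
    rw [if_pos hw.symm] at this
    exact one_ne_zero this
  set S : Matrix (Fin (N+1)) (Fin (N+1)) ℂ := ↑σ with hS
  set S' : Matrix (Fin (N+1)) (Fin (N+1)) ℂ := ↑(σ⁻¹) with hS'
  have hSS' : S * S' = 1 := by
    rw [hS, hS', ← Matrix.SpecialLinearGroup.coe_mul, mul_inv_cancel,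
      Matrix.SpecialLinearGroup.coe_one]
  have hS'S : S' * S = 1 := by
    rw [hS, hS', ← Matrix.SpecialLinearGroup.coe_mul, inv_mul_cancel,
      Matrix.SpecialLinearGroup.coe_one]
  refine ⟨S * D₀ * S', ?_, ?_⟩
  · intro h0
    have : D₀ = 0 := by
      have h1 := congrArg (fun M => S' * M * S) h0
      simp only [Matrix.mul_zero, Matrix.zero_mul] at h1
      calc D₀ = (S' * S) * D₀ * (S' * S) := by rw [hS'S]; simp [Matrix.one_mul, Matrix.mul_one]
        _ = S' * (S * D₀ * S') * S := by noncomm_ring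
        _ = 0 := h1
    exact hD₀ne this
  · have heq : (fun t : ℂˣ => ((t:ℂ) ^ (-w)) • ((σ * lamT ℓ t * σ⁻¹ : SL N) :
        Matrix (Fin (N+1)) (Fin (N+1)) ℂ))
        = fun t : ℂˣ => S * (Matrix.diagonal (fun j => (t:ℂ) ^ (snocExp ℓ j - w))) * S' := by
      funext t
      rw [Matrix.SpecialLinearGroup.coe_mul, Matrix.SpecialLinearGroup.coe_mul, lamT_coe]
      rw [show ((t:ℂ) ^ (-w)) • ((S * Matrix.diagonal (fun j => (t:ℂ) ^ (Fin.snoc ℓ (-(∑ i, ℓ i))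
        : Fin (N+1) → ℤ) j) * S')) = S * (((t:ℂ) ^ (-w)) • Matrix.diagonal
        (fun j => (t:ℂ) ^ ((Fin.snoc ℓ (-(∑ i, ℓ i)) : Fin (N+1) → ℤ) j))) * S' by
          rw [Matrix.mul_smul, Matrix.smul_mul]]
      congr 2
      rw [← Matrix.diagonal_smul]
      have hdd : (((t:ℂ) ^ (-w)) • fun j => (t:ℂ) ^ ((Fin.snoc ℓ (-(∑ i, ℓ i)) : Fin (N+1) → ℤ) j))
          = fun j => (t:ℂ) ^ (snocExp ℓ j - w) := by
        funext j
        show ((t:ℂ) ^ (-w)) * ((t:ℂ) ^ (snocExp ℓ j)) = (t:ℂ) ^ (snocExp ℓ j - w)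
        rw [← zpow_add₀ (Units.ne_zero t)]
        ring_nf
      rw [hdd]
    rw [heq]
    have hcont : Continuous (fun M : Matrix (Fin (N+1)) (Fin (N+1)) ℂ => S * M * S') :=
      (continuous_const.matrix_mul continuous_id).matrix_mul continuous_const
    have hd : Filter.Tendsto (fun t : ℂˣ => Matrix.diagonal (fun j => (t:ℂ) ^ (snocExp ℓ j - w)))
        zeroFilter (𝓝 D₀) := by
      rw [show (𝓝 D₀) = 𝓝 (fun i j => D₀ i j) from rfl]
      refine tendsto_pi_nhds.mpr ?_
      intro i
      refine tendsto_pi_nhds.mpr ?_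
      intro j
      by_cases hij : i = j
      · subst hij
        simp only [Matrix.diagonal_apply_eq, hD₀]
        by_cases hiw : snocExp ℓ i = w
        · have hfun : (fun t : ℂˣ => (t:ℂ) ^ (snocExp ℓ i - w)) = fun _ => (1:ℂ) := by
            funext t; rw [hiw, sub_self, zpow_zero]
          rw [hfun, if_pos hiw]
          exact tendsto_const_nhds
        · rw [if_neg hiw]
          exact tendsto_zpow_zeroFilter (by have := wIT_le ℓ i; omega)
      · simp only [Matrix.diagonal_apply_ne _ hij, hD₀]
        exact tendsto_const_nhds
    exact (hcont.tendsto D₀).comp hd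

end WeightI
section OneParam

variable {N : ℕ}

/-- The conjugated torus one-parameter subgroup `t ↦ σ λ_ℓ(t) σ⁻¹`. -/
def lamC (σ : SL N) (ℓ : Fin N → ℤ) : ℂˣ →* SL N :=
  ((MulAut.conj σ).toMonoidHom).comp (lamT ℓ)

lemma lamC_apply (σ : SL N) (ℓ : Fin N → ℤ) (t : ℂˣ) :
    lamC σ ℓ t = σ * lamT ℓ t * σ⁻¹ := rfl

lemma exists_laurent {g : ℂˣ → ℂ} (S : Finset ℤ) (d : ℤ → ℂ)
    (h : ∀ t : ℂˣ, g t = ∑ n ∈ S, d n * (t:ℂ) ^ n) :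
    ∃ c : ℤ →₀ ℂ, ∀ t : ℂˣ, g t = ∑ n ∈ c.support, c n * (t:ℂ) ^ n := by
  classical
  set d' : ℤ → ℂ := fun n => if n ∈ S then d n else 0 with hd'
  have hd'ne : ∀ n, d' n ≠ 0 → n ∈ S := by
    intro n hn
    by_contra hns
    rw [hd'] at hn
    simp only [if_neg hns] at hn
    exact hn rfl
  refine ⟨Finsupp.onFinset S d' hd'ne, fun t => ?_⟩
  rw [h t]
  have hsub : (Finsupp.onFinset S d' hd'ne).support ⊆ S := Finsupp.support_onFinset_subset
  rw [Finset.sum_subset hsub]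
  · refine Finset.sum_congr rfl (fun n hn => ?_)
    simp only [Finsupp.onFinset_apply, hd']
    rw [if_pos hn]
  · intro n hnS hns
    have h0 : d' n = 0 := by
      by_contra hne
      exact hns (Finsupp.mem_support_iff.mpr (by simpa using hne))
    simp only [Finsupp.onFinset_apply, h0, zero_mul]

lemma isOneParam_lamC (σ : SL N) (ℓ : Fin N → ℤ) : IsOneParam (lamC σ ℓ) := by
  classical
  intro i j
  set σm : Matrix (Fin (N+1)) (Fin (N+1)) ℂ := ↑σ with hσm
  set σm' : Matrix (Fin (N+1)) (Fin (N+1)) ℂ := ↑(σ⁻¹) with hσm'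
  refine exists_laurent ((Finset.univ : Finset (Fin (N+1))).image (snocExp ℓ))
    (fun n => ∑ x ∈ Finset.univ.filter (fun x => snocExp ℓ x = n), σm i x * σm' x j)
    (fun t => ?_)
  rw [lamC_apply, Matrix.SpecialLinearGroup.coe_mul, Matrix.SpecialLinearGroup.coe_mul, lamT_coe]
  rw [Matrix.mul_apply]
  have h1 : ∀ x, (σm * Matrix.diagonal
      (fun j => (t:ℂ) ^ ((Fin.snoc ℓ (-(∑ i, ℓ i)) : Fin (N+1) → ℤ) j))) i x
      = σm i x * (t:ℂ) ^ (snocExp ℓ x) := by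
    intro x
    rw [Matrix.mul_diagonal]
    rfl
  rw [Finset.sum_congr rfl (fun x _ => congrArg (· * σm' x j) (h1 x))]
  have h2 : ∀ n ∈ (Finset.univ : Finset (Fin (N+1))).image (snocExp ℓ),
      (∑ x ∈ Finset.univ.filter (fun x => snocExp ℓ x = n), σm i x * σm' x j) * (t:ℂ) ^ n
      = ∑ x ∈ Finset.univ.filter (fun x => snocExp ℓ x = n),
          σm i x * (t:ℂ) ^ (snocExp ℓ x) * σm' x j := by
    intro n _
    rw [Finset.sum_mul]
    refine Finset.sum_congr rfl (fun x hx => ?_)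
    rw [(Finset.mem_filter.mp hx).2]
    ring
  rw [Finset.sum_congr rfl h2,
    Finset.sum_fiberwise_of_maps_to (fun x _ => Finset.mem_image_of_mem _ (Finset.mem_univ x))]

end OneParam
section Diag

variable {N : ℕ}

lemma two_zpow_eq_one {m : ℤ} (h : (2:ℂ) ^ m = 1) : m = 0 :=
  two_zpow_injective (by simpa using h)

lemma prod_val_zpow {ι : Type*} [Fintype ι] (t : ℂˣ) (f : ι → ℤ) :
    (∏ j, ((t:ℂ)) ^ (f j)) = ((t ^ (∑ j, f j) : ℂˣ) : ℂ) := by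
  rw [zpow_finset_sum,
    show ((∏ i, t ^ f i : ℂˣ) : ℂ) = ∏ i, ((t ^ f i : ℂˣ) : ℂ) from
      map_prod (Units.coeHom ℂ) _ _]
  exact Finset.prod_congr rfl (fun j _ => (Units.val_zpow_eq_zpow_val _ _).symm)

lemma exists_conj_diag (lam : ℂˣ →* SL N) (hlam : IsOneParam lam) :
    ∃ (σ : SL N) (ℓ : Fin N → ℤ), ∀ t : ℂˣ, lam t = σ * lamT ℓ t * σ⁻¹ := by
  classical
  choose c hc using hlam
  set S : Finset ℤ := Finset.univ.biUnion (fun i : Fin (N+1) =>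
    Finset.univ.biUnion (fun j : Fin (N+1) => (c i j).support)) with hS
  set F : ℤ → Matrix (Fin (N+1)) (Fin (N+1)) ℂ := fun k => Matrix.of (fun i j => c i j k) with hF
  -- Laurent expansion of `lam`
  have hlamE : ∀ t : ℂˣ, ((lam t : SL N) : Matrix (Fin (N+1)) (Fin (N+1)) ℂ)
      = ∑ k ∈ S, ((t:ℂ) ^ k) • F k := by
    intro t
    funext i j
    rw [hc i j t]
    have : (∑ k ∈ S, ((t:ℂ) ^ k) • F k) i j = ∑ k ∈ S, (c i j k) * (t:ℂ) ^ k := by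
      rw [Matrix.sum_apply]
      · refine Finset.sum_congr rfl (fun k _ => ?_)
        simp [hF, mul_comm]
    rw [this]
    refine Finset.sum_subset (fun k hk => ?_) (fun k _ hk => ?_)
    · rw [hS]
      exact Finset.mem_biUnion.mpr ⟨i, Finset.mem_univ i,
        Finset.mem_biUnion.mpr ⟨j, Finset.mem_univ j, hk⟩⟩
    · rw [Finsupp.notMem_support_iff.mp hk, zero_mul]
  -- orthogonal idempotents
  have hFF : ∀ k ∈ S, ∀ l ∈ S, F k * F l = if k = l then F k else 0 := by
    have key : ∀ kl ∈ S ×ˢ S, (fun kl : ℤ × ℤ => F kl.1 * F kl.2 -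
        (if kl.1 = kl.2 then F kl.1 else 0)) kl = 0 := by
      refine char_sum_eq_zero pairChar_injective (S ×ˢ S) _ (fun p => ?_)
      have e1 : ∑ kl ∈ S ×ˢ S, pairChar kl p • (F kl.1 * F kl.2)
          = ((lam p.1 : SL N) : Matrix (Fin (N+1)) (Fin (N+1)) ℂ) *
            ((lam p.2 : SL N) : Matrix (Fin (N+1)) (Fin (N+1)) ℂ) := by
        rw [hlamE, hlamE, Finset.sum_mul_sum]
        rw [Finset.sum_product]
        refine Finset.sum_congr rfl (fun k _ => Finset.sum_congr rfl (fun l _ => ?_))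
        rw [pairChar_apply, smul_mul_smul_comm]
      have e2 : ∑ kl ∈ S ×ˢ S, pairChar kl p • (if kl.1 = kl.2 then F kl.1 else 0)
          = ((lam (p.1 * p.2) : SL N) : Matrix (Fin (N+1)) (Fin (N+1)) ℂ) := by
        rw [hlamE, Finset.sum_product]
        refine Finset.sum_congr rfl (fun k hk => ?_)
        rw [show (∑ l ∈ S, pairChar (k, l) p • (if k = l then F k else 0))
          = ∑ l ∈ S, (if k = l then pairChar (k, l) p • F k else 0) by
            refine Finset.sum_congr rfl (fun l _ => ?_)
            split <;> simp]
        rw [Finset.sum_ite_eq S k (fun l => pairChar (k, l) p • F k), if_pos hk,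
          pairChar_apply]
        simp only [Units.val_mul, mul_zpow]
      calc ∑ kl ∈ S ×ˢ S, pairChar kl p • (F kl.1 * F kl.2 - (if kl.1 = kl.2 then F kl.1 else 0))
          = ∑ kl ∈ S ×ˢ S, (pairChar kl p • (F kl.1 * F kl.2)
            - pairChar kl p • (if kl.1 = kl.2 then F kl.1 else 0)) := by
            refine Finset.sum_congr rfl (fun kl _ => ?_); rw [smul_sub]
        _ = 0 := by
            rw [Finset.sum_sub_distrib, e1, e2, ← Matrix.SpecialLinearGroup.coe_mul,
              ← _root_.map_mul, sub_self]
    intro k hk l hl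
    have := key (k, l) (Finset.mem_product.mpr ⟨hk, hl⟩)
    simpa [sub_eq_zero] using this
  have hFsum : ∑ k ∈ S, F k = 1 := by
    have := hlamE 1
    rw [_root_.map_one, Matrix.SpecialLinearGroup.coe_one] at this
    rw [show ∑ k ∈ S, ((((1:ℂˣ)):ℂ) ^ k) • F k = ∑ k ∈ S, F k from
      Finset.sum_congr rfl (fun k _ => by simp)] at this
    exact this.symm
  -- linear maps and ranges
  set fl : ℤ → ((Fin (N+1) → ℂ) →ₗ[ℂ] (Fin (N+1) → ℂ)) := fun k => Matrix.toLin' (F k) with hfl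
  have hflmul : ∀ k ∈ S, ∀ l ∈ S, fl k ∘ₗ fl l = if k = l then fl k else 0 := by
    intro k hk l hl
    rw [hfl, ← Matrix.toLin'_mul, hFF k hk l hl]
    split <;> simp
  have hflsum : ∑ k ∈ S, fl k = LinearMap.id := by
    rw [hfl, ← map_sum, hFsum]
    exact Matrix.toLin'_one
  set Wk : ↥S → Submodule ℂ (Fin (N+1) → ℂ) := fun k => LinearMap.range (fl ↑k) with hWk
  have hproj : ∀ (k : ↥S) (x : Fin (N+1) → ℂ), x ∈ Wk k → fl ↑k x = x := by
    rintro k x ⟨y, rfl⟩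
    have := hflmul ↑k k.2 ↑k k.2
    rw [if_pos rfl] at this
    calc fl ↑k (fl ↑k y) = (fl ↑k ∘ₗ fl ↑k) y := rfl
      _ = fl ↑k y := by rw [this]
  have hkill : ∀ (k l : ↥S), k ≠ l → ∀ x ∈ Wk l, fl ↑k x = 0 := by
    rintro k l hkl x ⟨y, rfl⟩
    have hne : (↑k : ℤ) ≠ ↑l := fun h => hkl (Subtype.ext h)
    have := hflmul ↑k k.2 ↑l l.2
    rw [if_neg hne] at this
    calc fl ↑k (fl ↑l y) = (fl ↑k ∘ₗ fl ↑l) y := rfl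
      _ = 0 := by rw [this]; rfl
  have htop : iSup Wk = ⊤ := by
    rw [eq_top_iff]
    intro x _
    have hx : x = ∑ k ∈ S, fl k x := by
      conv_lhs => rw [show x = LinearMap.id (R := ℂ) x from rfl, ← hflsum]
      rw [LinearMap.sum_apply]
    rw [hx, ← Finset.sum_attach S (fun k => fl k x)]
    refine Submodule.sum_mem _ (fun k _ => ?_)
    exact (le_iSup Wk k) (LinearMap.mem_range_self _ x)
  have hindep : iSupIndep Wk := by
    intro k
    rw [disjoint_iff_inf_le]
    intro x hx
    have hx1 : fl ↑k x = x := hproj k x hx.1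
    have hx2 : fl ↑k x = 0 := by
      have hle : (⨆ (j) (_ : j ≠ k), Wk j) ≤ LinearMap.ker (fl ↑k) := by
        refine iSup₂_le (fun j hj => ?_)
        intro y hy
        exact LinearMap.mem_ker.mpr (hkill k j (Ne.symm hj) y hy)
      exact LinearMap.mem_ker.mp (hle hx.2)
    rw [hx1] at hx2
    simp [hx2]
  have hinternal : DirectSum.IsInternal Wk :=
    DirectSum.isInternal_submodule_of_iSupIndep_of_iSup_eq_top hindep htop
  -- collected basis
  set bges : ∀ k : ↥S, Module.Basis (Fin (Module.finrank ℂ (Wk k))) ℂ (Wk k) :=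
    fun k => Module.finBasis ℂ (Wk k) with hbges
  set B := hinternal.collectedBasis bges with hB
  have hcard : Fintype.card (Σ k : ↥S, Fin (Module.finrank ℂ (Wk k))) = N + 1 := by
    have h1 := Module.finrank_eq_card_basis B
    have h2 : Module.finrank ℂ (Fin (N+1) → ℂ) = N + 1 := by
      rw [Module.finrank_pi]
      exact Fintype.card_fin _
    omega
  set eqv := Fintype.equivFinOfCardEq hcard with heqv
  set B' := B.reindex eqv with hB'
  set E : Fin (N+1) → ℤ := fun j => ((eqv.symm j).1 : ℤ) with hE
  have hmem : ∀ j, (B' j : Fin (N+1) → ℂ) ∈ Wk (eqv.symm j).1 := by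
    intro j
    rw [hB', Module.Basis.reindex_apply, hB]
    exact hinternal.collectedBasis_mem bges (eqv.symm j)
  have heigen : ∀ (t : ℂˣ) (j : Fin (N+1)),
      Matrix.toLin' ((lam t : SL N) : Matrix (Fin (N+1)) (Fin (N+1)) ℂ) (B' j)
        = ((t:ℂ) ^ (E j)) • B' j := by
    intro t j
    rw [hlamE t, map_sum, LinearMap.sum_apply]
    have hterm : ∀ k ∈ S, Matrix.toLin' (((t:ℂ) ^ k) • F k) (B' j)
        = if k = ((eqv.symm j).1 : ℤ) then ((t:ℂ) ^ (E j)) • B' j else 0 := by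
      intro k hk
      rw [_root_.map_smul, LinearMap.smul_apply]
      by_cases hkj : k = ((eqv.symm j).1 : ℤ)
      · rw [if_pos hkj, hkj]
        have h5 : fl ((eqv.symm j).1 : ℤ) (B' j) = B' j := hproj (eqv.symm j).1 (B' j) (hmem j)
        rw [hfl] at h5
        rw [h5]
      · rw [if_neg hkj]
        have : fl k (B' j) = 0 := by
          refine hkill ⟨k, hk⟩ (eqv.symm j).1 ?_ (B' j) (hmem j)
          intro h
          exact hkj (congrArg Subtype.val h)
        rw [hfl] at this
        rw [this, smul_zero]
    rw [Finset.sum_congr rfl hterm,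
      Finset.sum_ite_eq' S ((eqv.symm j).1 : ℤ) (fun _ => ((t:ℂ) ^ (E j)) • B' j),
      if_pos (eqv.symm j).1.2]
  -- change of basis matrix
  set P : Matrix (Fin (N+1)) (Fin (N+1)) ℂ := (Pi.basisFun ℂ (Fin (N+1))).toMatrix B' with hP
  have hPe : ∀ i j, P i j = B' j i := by
    intro i j
    rw [hP, Module.Basis.toMatrix_apply, Pi.basisFun_repr]
  have hPinv : Invertible P := (Pi.basisFun ℂ (Fin (N+1))).invertibleToMatrix B'
  have hdetP : P.det ≠ 0 :=
    ((Matrix.isUnit_iff_isUnit_det P).mp (isUnit_of_invertible P)).ne_zero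
  have hPD : ∀ t : ℂˣ, ((lam t : SL N) : Matrix (Fin (N+1)) (Fin (N+1)) ℂ) * P
      = P * Matrix.diagonal (fun j => (t:ℂ) ^ (E j)) := by
    intro t
    funext i j
    rw [Matrix.mul_apply, Matrix.mul_diagonal]
    have h1 : ∑ x, ((lam t : SL N) : Matrix (Fin (N+1)) (Fin (N+1)) ℂ) i x * P x j
        = (Matrix.toLin' ((lam t : SL N) : Matrix (Fin (N+1)) (Fin (N+1)) ℂ) (B' j)) i := by
      rw [Matrix.toLin'_apply, Matrix.mulVec]
      simp only [dotProduct]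
      refine Finset.sum_congr rfl (fun x _ => ?_)
      rw [hPe]
    rw [h1, heigen t j]
    rw [Pi.smul_apply, smul_eq_mul, hPe]
    ring
  -- sum of exponents is zero
  have hsumE : ∑ j, E j = 0 := by
    have hdet : ∀ t : ℂˣ, (∏ j, (t:ℂ) ^ (E j)) = 1 := by
      intro t
      have h1 := congrArg Matrix.det (hPD t)
      rw [Matrix.det_mul, Matrix.det_mul, Matrix.SpecialLinearGroup.det_coe, one_mul,
        Matrix.det_diagonal] at h1
      have h3 : P.det * 1 = P.det * ∏ j, (t:ℂ) ^ (E j) := by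
        rw [mul_one]; exact h1
      exact (mul_left_cancel₀ hdetP h3).symm
    have h2 := hdet (Units.mk0 (2:ℂ) two_ne_zero)
    rw [prod_val_zpow] at h2
    rw [Units.val_zpow_eq_zpow_val, Units.val_mk0] at h2
    exact two_zpow_eq_one h2
  -- conclusion
  set ℓ : Fin N → ℤ := fun i => E i.castSucc with hℓ
  have hlast : E (Fin.last N) = -(∑ i, ℓ i) := by
    have h4 := hsumE
    rw [Fin.sum_univ_castSucc] at h4
    have h5 : ∑ i, ℓ i = ∑ i : Fin N, E i.castSucc := rfl
    rw [h5]
    linarith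
  have hsnoc : (snocExp ℓ : Fin (N+1) → ℤ) = E := by
    funext j
    refine Fin.lastCases ?_ ?_ j
    · rw [show snocExp ℓ (Fin.last N) = -(∑ i, ℓ i) by simp [snocExp], hlast]
    · intro i
      simp [snocExp, hℓ]
  obtain ⟨cr, hcr⟩ := IsAlgClosed.exists_pow_nat_eq (k := ℂ) P.det (n := N+1) (by omega)
  have hcr0 : cr ≠ 0 := by
    intro h0
    rw [h0, zero_pow (Nat.succ_ne_zero N)] at hcr
    exact hdetP hcr.symm
  have hdetQ : (cr⁻¹ • P).det = 1 := by
    rw [Matrix.det_smul, Fintype.card_fin, inv_pow, hcr, inv_mul_cancel₀ hdetP]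
  set σ : SL N := ⟨cr⁻¹ • P, hdetQ⟩ with hσ
  refine ⟨σ, ℓ, fun t => ?_⟩
  have hQD : ((lam t : SL N) : Matrix (Fin (N+1)) (Fin (N+1)) ℂ) * (cr⁻¹ • P)
      = (cr⁻¹ • P) * Matrix.diagonal (fun j => (t:ℂ) ^ (E j)) := by
    rw [Matrix.mul_smul, Matrix.smul_mul, hPD t]
  have hgoal : lam t * σ = σ * lamT ℓ t := by
    apply Subtype.ext
    rw [Matrix.SpecialLinearGroup.coe_mul, Matrix.SpecialLinearGroup.coe_mul, lamT_coe]
    show ((lam t : SL N) : Matrix (Fin (N+1)) (Fin (N+1)) ℂ) * (cr⁻¹ • P) = (cr⁻¹ • P) * _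
    rw [hQD]
    congr 1
    rw [show (fun j => (t:ℂ) ^ ((Fin.snoc ℓ (-(∑ i, ℓ i)) : Fin (N+1) → ℤ) j))
      = fun j => (t:ℂ) ^ (E j) by
        funext j
        rw [show (Fin.snoc ℓ (-(∑ i, ℓ i)) : Fin (N+1) → ℤ) = snocExp ℓ from rfl, hsnoc]]
  calc lam t = (lam t * σ) * σ⁻¹ := by group
    _ = σ * lamT ℓ t * σ⁻¹ := by rw [hgoal]

end Diag
section ConvexSec

variable {N : ℕ}

/-- The linear functional `y ↦ ∑ i, c i * y i` on `ℝ^N`. -/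
def linF (c : Fin N → ℝ) : (Fin N → ℝ) →ₗ[ℝ] ℝ where
  toFun y := ∑ i, c i * y i
  map_add' y z := by
    simp only [Pi.add_apply, mul_add]
    rw [Finset.sum_add_distrib]
  map_smul' r y := by
    simp only [Pi.smul_apply, smul_eq_mul, RingHom.id_apply]
    rw [Finset.mul_sum]
    refine Finset.sum_congr rfl (fun i _ => ?_)
    ring

lemma linF_apply (c y : Fin N → ℝ) : linF c y = ∑ i, c i * y i := rfl

lemma le_linF_hull {c : Fin N → ℝ} {s : Set (Fin N → ℝ)} {b : ℝ}
    (hs : ∀ y ∈ s, b ≤ linF c y) {x : Fin N → ℝ} (hx : x ∈ convexHull ℝ s) :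
    b ≤ linF c x := by
  have hcvx : Convex ℝ {y : Fin N → ℝ | b ≤ linF c y} :=
    convex_halfSpace_ge (LinearMap.isLinear (linF c)) b
  exact convexHull_min hs hcvx hx

lemma linF_intCast (ℓ : Fin N → ℤ) (a : Fin N → ℤ) :
    linF (fun i => (ℓ i : ℝ)) (fun i => (a i : ℝ)) = ((∑ i, ℓ i * a i : ℤ) : ℝ) := by
  rw [linF_apply]
  push_cast
  rfl

lemma linF_negOne (ℓ : Fin N → ℤ) :
    linF (fun i => (ℓ i : ℝ)) (fun _ => (-1 : ℝ)) = ((-(∑ i, ℓ i) : ℤ) : ℝ) := by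
  rw [linF_apply]
  push_cast
  rw [← Finset.sum_neg_distrib]
  refine Finset.sum_congr rfl (fun i _ => by ring)

lemma linF_single (ℓ : Fin N → ℤ) (i₀ : Fin N) :
    linF (fun i => (ℓ i : ℝ)) (Pi.single i₀ (1 : ℝ)) = ((ℓ i₀ : ℤ) : ℝ) := by
  rw [linF_apply]
  rw [Finset.sum_eq_single i₀]
  · simp
  · intro j _ hj
    simp [Pi.single_apply, hj]
  · simp

/-- Given a point outside the convex hull of (the real images of) a finite set of integer
points, there is an integer linear functional strictly separating them. -/
lemma exists_int_separation {s : Finset (Fin N → ℤ)} (hs : s.Nonempty) {p : Fin N → ℝ}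
    (hp : p ∉ convexHull ℝ ((fun a : Fin N → ℤ => fun i => (a i : ℝ)) '' ↑s)) :
    ∃ ℓ : Fin N → ℤ, ∀ a ∈ s,
      linF (fun i => (ℓ i : ℝ)) p < linF (fun i => (ℓ i : ℝ)) (fun i => (a i : ℝ)) := by
  classical
  set s' : Set (Fin N → ℝ) := (fun a : Fin N → ℤ => fun i => (a i : ℝ)) '' ↑s with hs'
  have hclosed : IsClosed (convexHull ℝ s') :=
    ((s.finite_toSet.image _).isCompact_convexHull ℝ).isClosed
  obtain ⟨f, u, hfp, hfy⟩ :=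
    geometric_hahn_banach_point_closed (convex_convexHull ℝ s') hclosed hp
  set cf : Fin N → ℝ := fun i => f (Pi.single i 1) with hcf
  have hrepr : ∀ y : Fin N → ℝ, f y = ∑ i, y i * cf i := by
    intro y
    have h0 := LinearMap.pi_apply_eq_sum_univ (f : (Fin N → ℝ) →ₗ[ℝ] ℝ) y
    rw [show f y = (f : (Fin N → ℝ) →ₗ[ℝ] ℝ) y from rfl, h0]
    refine Finset.sum_congr rfl (fun i _ => ?_)
    rw [smul_eq_mul]
    congr 1
    rw [hcf]
    show f _ = f _
    congr 1
    funext j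
    simp [Pi.single_apply, eq_comm]
  set ε : ℝ := u - f p with hε
  have hε0 : 0 < ε := by rw [hε]; linarith
  set K : ℝ := s.sup' hs (fun a => ∑ i, |(a i : ℝ) - p i|) with hK
  set n : ℕ := ⌈K / (2 * ε)⌉₊ + 1 with hn
  have hnK : K / (2 * ε) < (n : ℝ) := by
    calc K / (2 * ε) ≤ (⌈K / (2 * ε)⌉₊ : ℝ) := Nat.le_ceil _
      _ < (n : ℝ) := by rw [hn]; exact_mod_cast Nat.lt_succ_self _
  refine ⟨fun i => round ((n : ℝ) * cf i), fun a ha => ?_⟩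
  set y : Fin N → ℝ := fun i => (a i : ℝ) with hy
  have hfy' : u < f y :=
    hfy y (subset_convexHull ℝ s' (Set.mem_image_of_mem _ (Finset.mem_coe.mpr ha)))
  have hKa : ∑ i, |y i - p i| ≤ K := Finset.le_sup' (fun a => ∑ i, |(a i : ℝ) - p i|) ha
  have hdiffsum : linF (fun i => ((round ((n : ℝ) * cf i) : ℤ) : ℝ)) y
      - linF (fun i => ((round ((n : ℝ) * cf i) : ℤ) : ℝ)) p
      = ∑ i, ((round ((n : ℝ) * cf i) : ℤ) : ℝ) * (y i - p i) := by
    rw [linF_apply, linF_apply, ← Finset.sum_sub_distrib]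
    refine Finset.sum_congr rfl (fun i _ => by ring)
  have hsplit : ∑ i, ((round ((n : ℝ) * cf i) : ℤ) : ℝ) * (y i - p i)
      = (∑ i, (((round ((n : ℝ) * cf i) : ℤ) : ℝ) - (n : ℝ) * cf i) * (y i - p i))
        + (n : ℝ) * (f y - f p) := by
    rw [hrepr y, hrepr p, ← Finset.sum_sub_distrib, Finset.mul_sum, ← Finset.sum_add_distrib]
    refine Finset.sum_congr rfl (fun i _ => by ring)
  have hbound : (∑ i, (((round ((n : ℝ) * cf i) : ℤ) : ℝ) - (n : ℝ) * cf i) * (y i - p i))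
      ≥ -(K / 2) := by
    have h1 : ∀ i : Fin N, (((round ((n : ℝ) * cf i) : ℤ) : ℝ) - (n : ℝ) * cf i) * (y i - p i)
        ≥ -((1/2) * |y i - p i|) := by
      intro i
      have h2 : |((round ((n : ℝ) * cf i) : ℤ) : ℝ) - (n : ℝ) * cf i| ≤ 1/2 := by
        rw [abs_sub_comm]
        exact abs_sub_round _
      have h3 := neg_abs_le ((((round ((n : ℝ) * cf i) : ℤ) : ℝ) - (n : ℝ) * cf i) * (y i - p i))
      have h4 : |(((round ((n : ℝ) * cf i) : ℤ) : ℝ) - (n : ℝ) * cf i) * (y i - p i)|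
          ≤ (1/2) * |y i - p i| := by
        rw [abs_mul]
        exact mul_le_mul_of_nonneg_right h2 (abs_nonneg _)
      linarith
    calc (∑ i, (((round ((n : ℝ) * cf i) : ℤ) : ℝ) - (n : ℝ) * cf i) * (y i - p i))
        ≥ ∑ i, -((1/2) * |y i - p i|) := Finset.sum_le_sum (fun i _ => h1 i)
      _ = -((1/2) * ∑ i, |y i - p i|) := by
          rw [Finset.mul_sum, ← Finset.sum_neg_distrib]
      _ ≥ -(K / 2) := by
          have : (1/2 : ℝ) * ∑ i, |y i - p i| ≤ K / 2 := by linarith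
          linarith
  have hfyp : f y - f p ≥ ε := by linarith
  have hnε : (n : ℝ) * ε > K / 2 := by
    have h2ε : 0 < 2 * ε := by linarith
    have := (div_lt_iff₀ h2ε).mp hnK
    nlinarith
  have hpos : (n : ℝ) * (f y - f p) ≥ (n : ℝ) * ε := by
    have hn0 : (0 : ℝ) ≤ (n : ℝ) := Nat.cast_nonneg n
    nlinarith
  have hgoal : (∑ i, ((round ((n : ℝ) * cf i) : ℤ) : ℝ) * (y i - p i)) > 0 := by
    rw [hsplit]
    nlinarith [hbound, hpos, hnε, hε0]
  linarith [hdiffsum, hgoal]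

end ConvexSec

/-- For nonzero `v ∈ V`, `w ∈ W` in rational representations of `G` with
torus weight decompositions, the pair `(v, w)` is uniformly K-stable if and only if there
is a positive integer `m` such that for every `σ ∈ G` one has the Minkowski-sum inclusion
`(1 − 1/m)·N(ρ_V(σ)v) + (1/m)·deg(V)·N(I) ⊆ N(ρ_W(σ)w)`. -/
theorem statement15 (N : ℕ) (hN : 1 ≤ N) {V W : Type}
    [NormedAddCommGroup V] [NormedSpace ℂ V] [FiniteDimensional ℂ V]
    [NormedAddCommGroup W] [NormedSpace ℂ W] [FiniteDimensional ℂ W]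
    (ρV : SL N →* (V ≃ₗ[ℂ] V)) (hρV : IsRational ρV)
    (ρW : SL N →* (W ≃ₗ[ℂ] W)) (hρW : IsRational ρW)
    (AV : Finset (Fin N → ℤ)) (πV : (Fin N → ℤ) → (V →ₗ[ℂ] V)) (hV : IsWtDecomp ρV AV πV)
    (AW : Finset (Fin N → ℤ)) (πW : (Fin N → ℤ) → (W →ₗ[ℂ] W)) (hW : IsWtDecomp ρW AW πW)
    (v : V) (hv : v ≠ 0) (w : W) (hw : w ≠ 0)
    (q : ℕ) (hq : IsDeg ρV q) :
    KUniform ρV ρW v w q ↔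
      ∃ m : ℕ, 0 < m ∧ ∀ σ : SL N,
        (1 - 1 / (m : ℝ)) • wtPolytope AV πV (ρV σ v) +
            ((q : ℝ) / (m : ℝ)) • simplexNI N ⊆
          wtPolytope AW πW (ρW σ w) := by
  classical
  constructor
  · -- Forward direction
    rintro ⟨m, hm, hKU⟩
    refine ⟨m, hm, fun σ0 => ?_⟩
    have hm0 : (0:ℝ) < (m:ℝ) := by exact_mod_cast hm
    have hvσ : ρV σ0 v ≠ 0 := by
      simp only [ne_eq, LinearEquiv.map_eq_zero_iff]; exact hv
    have hwσ : ρW σ0 w ≠ 0 := by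
      simp only [ne_eq, LinearEquiv.map_eq_zero_iff]; exact hw
    -- Key integer inequality for all torus directions
    have hkey : ∀ ℓ : Fin N → ℤ,
        (m:ℤ) * (wtT AV πV ℓ (ρV σ0 v) - wtT AW πW ℓ (ρW σ0 w))
          ≥ wtT AV πV ℓ (ρV σ0 v) - (q:ℤ) * wIT ℓ := by
      intro ℓ
      have hfn : (fun t : ℂˣ => lamC σ0⁻¹ ℓ t) = fun t : ℂˣ => σ0⁻¹ * lamT ℓ t * (σ0⁻¹)⁻¹ := by
        funext t
        rw [lamC_apply]
      have h1 : HasWeight ρV (fun t => lamC σ0⁻¹ ℓ t) v (wtT AV πV ℓ (ρV σ0 v)) := by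
        have h := hasWeight_conj hV σ0⁻¹ ℓ hv
        rw [inv_inv] at h
        rwa [show (fun t : ℂˣ => lamC σ0⁻¹ ℓ t) = fun t : ℂˣ => σ0⁻¹ * lamT ℓ t * σ0 by
          rw [hfn, inv_inv]]
      have h2 : HasWeight ρW (fun t => lamC σ0⁻¹ ℓ t) w (wtT AW πW ℓ (ρW σ0 w)) := by
        have h := hasWeight_conj hW σ0⁻¹ ℓ hw
        rw [inv_inv] at h
        rwa [show (fun t : ℂˣ => lamC σ0⁻¹ ℓ t) = fun t : ℂˣ => σ0⁻¹ * lamT ℓ t * σ0 by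
          rw [hfn, inv_inv]]
      have h3 : HasWeightI (fun t => lamC σ0⁻¹ ℓ t) (wIT ℓ) := by
        have h := hasWeightI_conj σ0⁻¹ ℓ
        rwa [show (fun t : ℂˣ => lamC σ0⁻¹ ℓ t) = fun t : ℂˣ => σ0⁻¹ * lamT ℓ t * (σ0⁻¹)⁻¹ from
          hfn]
      exact hKU (lamC σ0⁻¹ ℓ) (isOneParam_lamC σ0⁻¹ ℓ) _ _ _ h3 h1 h2
    -- Inclusion of polytopes
    intro p hp
    rw [show (1 - 1 / (m : ℝ)) • wtPolytope AV πV (ρV σ0 v) +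
        ((q : ℝ) / (m : ℝ)) • simplexNI N
        = convexHull ℝ ((1 - 1 / (m : ℝ)) •
            ((fun a : Fin N → ℤ => fun i => (a i : ℝ)) '' wtSupp AV πV (ρV σ0 v)) +
          ((q : ℝ) / (m : ℝ)) •
            (insert (fun _ => (-1 : ℝ)) (Set.range fun i : Fin N => Pi.single i (1 : ℝ)))) by
      rw [convexHull_add, convexHull_smul, convexHull_smul]; rfl] at hp
    refine convexHull_min ?_ (convex_convexHull ℝ _) hp
    rintro x ⟨x₁, hx₁, x₂, hx₂, rfl⟩
    obtain ⟨y₁, hy₁, rfl⟩ := hx₁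
    obtain ⟨a, ha, rfl⟩ := hy₁
    obtain ⟨y₂, hy₂, rfl⟩ := hx₂
    by_contra hout
    set TW : Finset (Fin N → ℤ) := AW.filter (fun b => πW b (ρW σ0 w) ≠ 0) with hTW
    have hTWcoe : ↑TW = wtSupp AW πW (ρW σ0 w) := by
      ext b; simp [hTW, wtSupp]
    have hTWne : TW.Nonempty := by
      obtain ⟨b, hb⟩ := wtSupp_nonempty hW hwσ
      exact ⟨b, by rw [← Finset.mem_coe, hTWcoe]; exact hb⟩
    obtain ⟨ℓ, hsep⟩ := exists_int_separation hTWne (p := (1 - 1 / (m : ℝ)) •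
        (fun i => (a i : ℝ)) + ((q : ℝ) / (m : ℝ)) • y₂)
      (by rw [hTWcoe]; exact hout)
    -- numeric contradiction
    set wv : ℤ := wtT AV πV ℓ (ρV σ0 v) with hwv
    set ww : ℤ := wtT AW πW ℓ (ρW σ0 w) with hww
    set wI : ℤ := wIT ℓ with hwI
    have hkeyR : (m:ℝ) * ((wv:ℝ) - (ww:ℝ)) ≥ (wv:ℝ) - (q:ℝ) * (wI:ℝ) := by
      exact_mod_cast hkey ℓ
    obtain ⟨b, hb, hbe⟩ := wtT_mem hW ℓ hwσ
    have hb' : b ∈ TW := by rw [← Finset.mem_coe, hTWcoe]; exact hb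
    have hsepb := hsep b hb'
    set L := linF (fun i => (ℓ i : ℝ)) with hL
    have hbe' : (∑ i, ℓ i * b i) = ww := hbe
    have hLb : L (fun i => (b i : ℝ)) = (ww:ℝ) := by
      rw [hL, linF_intCast, hbe']
    have hLp : L ((1 - 1 / (m : ℝ)) • (fun i => (a i : ℝ)) + ((q : ℝ) / (m : ℝ)) • y₂)
        = (1 - 1 / (m : ℝ)) * L (fun i => (a i : ℝ)) + ((q : ℝ) / (m : ℝ)) * L y₂ := by
      rw [hL, map_add, LinearMap.map_smul, LinearMap.map_smul, smul_eq_mul, smul_eq_mul]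
    have hLa : L (fun i => (a i : ℝ)) = ((∑ i, ℓ i * a i : ℤ) : ℝ) := by
      rw [hL, linF_intCast]
    have hLage : ((wv:ℝ)) ≤ L (fun i => (a i : ℝ)) := by
      rw [hLa]
      exact_mod_cast wtT_le ℓ ha
    have hbdd : BddBelow (insert (-(∑ i, ℓ i)) (Set.range ℓ)) :=
      ((Set.finite_range ℓ).insert _).bddBelow
    have hLy₂ : ((wI:ℝ)) ≤ L y₂ := by
      rcases hy₂ with h | ⟨i₀, rfl⟩
      · rw [h, hL, linF_negOne]
        have : wI ≤ -(∑ i, ℓ i) := csInf_le hbdd (Set.mem_insert _ _)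
        exact_mod_cast this
      · rw [hL, linF_single]
        have : wI ≤ ℓ i₀ := csInf_le hbdd (Set.mem_insert_of_mem _ ⟨i₀, rfl⟩)
        exact_mod_cast this
    have hc₁ : (0:ℝ) ≤ 1 - 1 / (m : ℝ) := by
      have hm1 : (1:ℝ) ≤ (m:ℝ) := by exact_mod_cast hm
      have : 1 / (m:ℝ) ≤ 1 := by
        rw [div_le_one hm0]; exact hm1
      linarith
    have hc₂ : (0:ℝ) ≤ (q : ℝ) / (m : ℝ) := by positivity
    have hwwle : (ww:ℝ) ≤ (1 - 1 / (m : ℝ)) * (wv:ℝ) + ((q : ℝ) / (m : ℝ)) * (wI:ℝ) := by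
      have h10 : (ww:ℝ) * (m:ℝ) ≤ ((1 - 1 / (m : ℝ)) * (wv:ℝ)
          + ((q : ℝ) / (m : ℝ)) * (wI:ℝ)) * (m:ℝ) := by
        have hexp : ((1 - 1 / (m : ℝ)) * (wv:ℝ) + ((q : ℝ) / (m : ℝ)) * (wI:ℝ)) * (m:ℝ)
            = (m:ℝ) * (wv:ℝ) - (wv:ℝ) + (q:ℝ) * (wI:ℝ) := by
          field_simp
        rw [hexp]
        nlinarith [hkeyR]
      exact le_of_mul_le_mul_right h10 hm0
    have hchain : (ww:ℝ) ≤ L ((1 - 1 / (m : ℝ)) • (fun i => (a i : ℝ))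
        + ((q : ℝ) / (m : ℝ)) • y₂) := by
      rw [hLp]
      have t1 : (1 - 1 / (m : ℝ)) * (wv:ℝ) ≤ (1 - 1 / (m : ℝ)) * L (fun i => (a i : ℝ)) :=
        mul_le_mul_of_nonneg_left hLage hc₁
      have t2 : ((q : ℝ) / (m : ℝ)) * (wI:ℝ) ≤ ((q : ℝ) / (m : ℝ)) * L y₂ :=
        mul_le_mul_of_nonneg_left hLy₂ hc₂
      linarith
    rw [hLb] at hsepb
    linarith
  · -- Converse direction
    rintro ⟨m, hm, hIncl⟩
    refine ⟨m, hm, fun lam hOP wI wv ww hwI hwv hww => ?_⟩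
    have hm0 : (0:ℝ) < (m:ℝ) := by exact_mod_cast hm
    obtain ⟨σ, ℓ, hconj⟩ := exists_conj_diag lam hOP
    have hfun : (fun t : ℂˣ => lam t) = fun t => σ * lamT ℓ t * σ⁻¹ := funext hconj
    have hvσ : ρV σ⁻¹ v ≠ 0 := by
      simp only [ne_eq, LinearEquiv.map_eq_zero_iff]; exact hv
    have hwσ : ρW σ⁻¹ w ≠ 0 := by
      simp only [ne_eq, LinearEquiv.map_eq_zero_iff]; exact hw
    have e1 : wv = wtT AV πV ℓ (ρV σ⁻¹ v) :=
      hasWeight_unique hwv (by rw [hfun]; exact hasWeight_conj hV σ ℓ hv)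
    have e2 : ww = wtT AW πW ℓ (ρW σ⁻¹ w) :=
      hasWeight_unique hww (by rw [hfun]; exact hasWeight_conj hW σ ℓ hw)
    have e3 : wI = wIT ℓ :=
      hasWeightI_unique hwI (by rw [hfun]; exact hasWeightI_conj σ ℓ)
    obtain ⟨a, ha, hae⟩ := wtT_mem hV ℓ hvσ
    obtain ⟨j₀, hj₀⟩ := wIT_mem ℓ
    -- choose the simplex vertex attaining the minimum
    obtain ⟨d, hd, hLd⟩ : ∃ d : Fin N → ℝ,
        d ∈ insert (fun _ => (-1:ℝ)) (Set.range fun i : Fin N => Pi.single i (1 : ℝ)) ∧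
        linF (fun i => (ℓ i : ℝ)) d = ((wIT ℓ : ℤ) : ℝ) := by
      revert hj₀
      refine Fin.lastCases ?_ ?_ j₀
      · intro hj
        refine ⟨fun _ => (-1:ℝ), Set.mem_insert _ _, ?_⟩
        rw [linF_negOne,
          show -(∑ i, ℓ i) = snocExp ℓ (Fin.last N) by simp [snocExp], hj]
      · intro i₀ hj
        refine ⟨Pi.single i₀ 1, Set.mem_insert_of_mem _ ⟨i₀, rfl⟩, ?_⟩
        rw [linF_single,
          show ℓ i₀ = snocExp ℓ i₀.castSucc by simp [snocExp], hj]
    have hpmem : (1 - 1/(m:ℝ)) • (fun i => (a i : ℝ)) + ((q:ℝ)/(m:ℝ)) • d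
        ∈ (1 - 1/(m:ℝ)) • wtPolytope AV πV (ρV σ⁻¹ v) + ((q:ℝ)/(m:ℝ)) • simplexNI N := by
      refine Set.add_mem_add ?_ ?_
      · exact Set.smul_mem_smul_set (subset_convexHull ℝ _ (Set.mem_image_of_mem _ ha))
      · exact Set.smul_mem_smul_set (subset_convexHull ℝ _ hd)
    have hpQ := hIncl σ⁻¹ hpmem
    have hge : ((wtT AW πW ℓ (ρW σ⁻¹ w) : ℤ) : ℝ)
        ≤ linF (fun i => (ℓ i : ℝ)) ((1 - 1/(m:ℝ)) • (fun i => (a i:ℝ)) + ((q:ℝ)/(m:ℝ)) • d) := by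
      refine le_linF_hull (fun y hy => ?_) hpQ
      obtain ⟨b, hb, rfl⟩ := hy
      rw [linF_intCast]
      exact_mod_cast wtT_le ℓ hb
    have hLp : linF (fun i => (ℓ i : ℝ)) ((1 - 1/(m:ℝ)) • (fun i => (a i:ℝ)) + ((q:ℝ)/(m:ℝ)) • d)
        = (1 - 1/(m:ℝ)) * ((wtT AV πV ℓ (ρV σ⁻¹ v) : ℤ):ℝ)
          + ((q:ℝ)/(m:ℝ)) * ((wIT ℓ : ℤ):ℝ) := by
      have hae' : (∑ i, ℓ i * a i) = wtT AV πV ℓ (ρV σ⁻¹ v) := hae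
      rw [map_add, LinearMap.map_smul, LinearMap.map_smul, smul_eq_mul, smul_eq_mul,
        linF_intCast, hae', hLd]
    rw [hLp] at hge
    have hreal : (m:ℝ) * (((wtT AV πV ℓ (ρV σ⁻¹ v) : ℤ):ℝ)
          - ((wtT AW πW ℓ (ρW σ⁻¹ w) : ℤ):ℝ))
        ≥ ((wtT AV πV ℓ (ρV σ⁻¹ v) : ℤ):ℝ) - (q:ℝ) * ((wIT ℓ : ℤ):ℝ) := by
      have h10 := mul_le_mul_of_nonneg_right hge (le_of_lt hm0)
      have hexp : ((1 - 1/(m:ℝ)) * ((wtT AV πV ℓ (ρV σ⁻¹ v) : ℤ):ℝ)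
            + ((q:ℝ)/(m:ℝ)) * ((wIT ℓ : ℤ):ℝ)) * (m:ℝ)
          = (m:ℝ) * ((wtT AV πV ℓ (ρV σ⁻¹ v) : ℤ):ℝ) - ((wtT AV πV ℓ (ρV σ⁻¹ v) : ℤ):ℝ)
            + (q:ℝ) * ((wIT ℓ : ℤ):ℝ) := by
        field_simp
      rw [hexp] at h10
      nlinarith [h10]
    rw [ge_iff_le, e1, e2, e3]
    exact_mod_cast hreal
end
end
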